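/- arXiv:2103.02329 — 8 statements merged into one kernel-verified Lean document; each statement's English description precedes it below -/
import Mathlib

section
/- Let K be a number field with ring of integers O_K and let p be a prime number. Then the ideal pO_K is unramified in O_K — that is, no prime ideal P of O_K satisfies P^2 ∣ pO_K — if and only if p does not divide the discriminant Disc(K). -/
open Algebra

section PiTrace

variable {F : Type*} [Field F] {η : Type*} [Fintype η] (A : η → Type*)
  [∀ i, CommRing (A i)] [∀ i, Algebra F (A i)] [∀ i, FiniteDimensional F (A i)]

private lemma aux_trace_pi (z : ∀ i, A i) :
    Algebra.trace F (∀ i, A i) z = ∑ i, Algebra.trace F (A i) (z i) := by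
  classical
  let s := fun i => Module.finBasis F (A i)
  rw [Algebra.trace_eq_matrix_trace (Pi.basis s) z]
  rw [Matrix.trace, ← Finset.univ_sigma_univ, Finset.sum_sigma]
  refine Finset.sum_congr rfl fun j _ => ?_
  rw [Algebra.trace_eq_matrix_trace (s j) (z j), Matrix.trace]
  refine Finset.sum_congr rfl fun k _ => ?_
  simp only [Matrix.diag, Algebra.leftMulMatrix_eq_repr_mul, Pi.basis_repr, Pi.basis_apply,
    Pi.mul_apply, Pi.single_eq_same]

private lemma aux_nondeg_pi
    (h : ∀ i, (Algebra.traceForm F (A i)).Nondegenerate) :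
    (Algebra.traceForm F (∀ i, A i)).Nondegenerate := by
  classical
  suffices hL : (Algebra.traceForm F (∀ i, A i)).SeparatingLeft from
    ⟨hL, fun z hz => hL z fun y => by simpa only [Algebra.traceForm_apply, mul_comm] using hz y⟩
  intro z hz
  funext j
  refine (h j).1 (z j) fun y => ?_
  have hzy := hz (Pi.single j y)
  rw [Algebra.traceForm_apply, aux_trace_pi] at hzy
  rw [Finset.sum_eq_single j (fun i _ hij => by
      simp [Pi.mul_apply, Pi.single_eq_of_ne hij]) (fun h => absurd (Finset.mem_univ j) h)]
    at hzy
  simpa [Algebra.traceForm_apply, Pi.mul_apply] using hzy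

end PiTrace

private lemma aux_nondeg_of_reduced (p : ℕ) [Fact p.Prime] (A : Type*) [CommRing A]
    [Algebra (ZMod p) A] [FiniteDimensional (ZMod p) A] [IsReduced A] :
    (Algebra.traceForm (ZMod p) A).Nondegenerate := by
  classical
  haveI : IsArtinianRing A := isArtinian_of_tower (ZMod p) isArtinian_of_fg_of_artinian'
  letI : Fintype {I : Ideal A | I.IsMaximal} :=
    (IsArtinianRing.setOfPred_isMaximal_finite A).fintype
  letI : ∀ I : {I : Ideal A | I.IsMaximal}, Field (A ⧸ (I : Ideal A)) := fun I =>
    haveI : (I : Ideal A).IsMaximal := I.2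
    Ideal.Quotient.field _
  haveI : ∀ I : {I : Ideal A | I.IsMaximal}, Module.Finite (ZMod p) (A ⧸ (I : Ideal A)) :=
    fun I => Module.Finite.of_surjective (Ideal.Quotient.mkₐ (ZMod p) _).toLinearMap
      Ideal.Quotient.mk_surjective
  haveI : ∀ I : {I : Ideal A | I.IsMaximal}, Algebra.IsAlgebraic (ZMod p) (A ⧸ (I : Ideal A)) :=
    fun I => Algebra.IsAlgebraic.of_finite _ _
  have hfac : ∀ I : {I : Ideal A | I.IsMaximal},
      (Algebra.traceForm (ZMod p) (A ⧸ (I : Ideal A))).Nondegenerate := fun I =>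
    traceForm_nondegenerate _ _
  have hpi := aux_nondeg_pi (fun I : {I : Ideal A | I.IsMaximal} => A ⧸ (I : Ideal A)) hfac
  let e : A ≃+* ∀ I : {I : Ideal A | I.IsMaximal}, A ⧸ (I : Ideal A) :=
    (IsArtinianRing.equivPi A).toRingEquiv.trans
      (RingEquiv.piCongrLeft (fun I : {I : Ideal A | I.IsMaximal} => A ⧸ (I : Ideal A))
        (MaximalSpectrum.equivSubtype (R := A) :
          MaximalSpectrum A ≃ {I : Ideal A | I.IsMaximal}))
  let e' : A ≃ₐ[ZMod p] ∀ I : {I : Ideal A | I.IsMaximal}, A ⧸ (I : Ideal A) :=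
    AlgEquiv.ofRingEquiv (f := e) (fun x => by
      have h : e.toRingHom.comp (algebraMap (ZMod p) A) =
          algebraMap (ZMod p) (∀ I : {I : Ideal A | I.IsMaximal}, A ⧸ (I : Ideal A)) :=
        RingHom.ext_zmod _ _
      exact DFunLike.congr_fun h x)
  suffices hL : (Algebra.traceForm (ZMod p) A).SeparatingLeft from
    ⟨hL, fun z hz => hL z fun y => by simpa only [Algebra.traceForm_apply, mul_comm] using hz y⟩
  intro x hx
  have hex : e' x = 0 := by
    refine hpi.1 (e' x) fun y => ?_
    have := hx (e'.symm y)
    rw [Algebra.traceForm_apply] at this ⊢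
    rw [← Algebra.trace_eq_of_algEquiv e' (x * e'.symm y)] at this
    rwa [map_mul, AlgEquiv.apply_symm_apply] at this
  have := e'.injective (hex.trans (map_zero e').symm)
  simpa using this

private theorem aux_main (O : Type*) [CommRing O] [IsDedekindDomain O]
    {ι : Type*} [Fintype ι] [DecidableEq ι] [Nonempty ι] (b : Module.Basis ι ℤ O)
    (p : ℕ) [hpf : Fact p.Prime] :
    (¬ ∃ P : Ideal O, P.IsPrime ∧ P ^ 2 ∣ Ideal.span {(p : O)}) ↔
      ¬ (p : ℤ) ∣ Algebra.discr ℤ b := by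
  classical
  have hp : p.Prime := hpf.out
  set I : Ideal O := Ideal.span {(p : O)} with hI
  have hcard : Fintype.card ι ≠ 0 := Fintype.card_ne_zero
  have hnorm : ∀ n : ℕ, Algebra.norm ℤ ((n : ℕ) : O) = (n : ℤ) ^ Fintype.card ι := by
    intro n
    have h : ((n : ℕ) : O) = algebraMap ℤ O (n : ℤ) := by push_cast; rfl
    rw [h, Algebra.norm_algebraMap_of_basis b]
  have hp0 : (p : O) ≠ 0 := by
    intro h
    have h2 : (p : ℤ) • (1 : O) = 0 := by
      rw [zsmul_eq_mul, mul_one]; push_cast; exact_mod_cast h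
    have h3 : (p : ℤ) • b.repr 1 = 0 := by rw [← map_smul, h2, map_zero]
    rcases smul_eq_zero.mp h3 with h4 | h4
    · exact hp.ne_zero (by exact_mod_cast h4)
    · have h5 : (1 : O) = 0 := b.repr.injective (by rw [h4, map_zero])
      exact one_ne_zero h5
  have hIbot : I ≠ ⊥ := by
    rw [hI, Ne, Ideal.span_singleton_eq_bot]
    exact hp0
  -- CharP (O ⧸ I) p
  haveI : CharP (O ⧸ I) p := ⟨fun n => by
    rw [← map_natCast (Ideal.Quotient.mk I) n, Ideal.Quotient.eq_zero_iff_mem, hI,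
      Ideal.mem_span_singleton]
    constructor
    · intro hdvd
      have h2 : (p : ℤ) ^ Fintype.card ι ∣ (n : ℤ) ^ Fintype.card ι := by
        have := map_dvd (Algebra.norm ℤ) hdvd
        rwa [hnorm p, hnorm n] at this
      have hpZ : Prime (p : ℤ) := Nat.prime_iff_prime_int.mp hp
      have : (p : ℤ) ∣ (n : ℤ) :=
        hpZ.dvd_of_dvd_pow ((dvd_pow_self (p : ℤ) hcard).trans h2)
      exact_mod_cast this
    · rintro ⟨m, rfl⟩
      exact ⟨(m : O), by push_cast; ring⟩⟩
  letI : Algebra (ZMod p) (O ⧸ I) := ZMod.algebra _ p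
  let mk : O →+* O ⧸ I := Ideal.Quotient.mk I
  let bv : ι → O ⧸ I := fun i => mk (b i)
  have hmem : ∀ x ∈ I, ∀ i, (p : ℤ) ∣ b.repr x i := by
    intro x hx i
    rw [hI, Ideal.mem_span_singleton] at hx
    obtain ⟨y, rfl⟩ := hx
    have h : (p : O) * y = (p : ℤ) • y := by
      rw [zsmul_eq_mul]; push_cast; ring
    rw [h, map_smul]
    exact ⟨b.repr y i, rfl⟩
  have key : ∀ x : O, mk x = ∑ i, ((b.repr x i : ℤ) : ZMod p) • bv i := by
    intro x
    conv_lhs => rw [← b.sum_repr x]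
    rw [map_sum]
    refine Finset.sum_congr rfl fun i _ => ?_
    rw [Int.cast_smul_eq_zsmul, map_zsmul]
  have hli : LinearIndependent (ZMod p) bv := by
    rw [Fintype.linearIndependent_iff]
    intro g hg i
    let g' : ι → ℤ := fun i => ((g i).val : ℤ)
    have hgg : ∀ i, ((g' i : ℤ) : ZMod p) = g i := by
      intro i
      simp [g', ZMod.natCast_val, ZMod.cast_id]
    have hsum : mk (∑ i, g' i • b i) = 0 := by
      rw [map_sum, ← hg]
      refine Finset.sum_congr rfl fun i _ => ?_
      rw [map_zsmul, ← Int.cast_smul_eq_zsmul (ZMod p), hgg]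
    have hmemI : (∑ i, g' i • b i) ∈ I := Ideal.Quotient.eq_zero_iff_mem.mp hsum
    have hdvd := hmem _ hmemI i
    rw [Module.Basis.repr_sum_self] at hdvd
    rw [← hgg i]
    exact (ZMod.intCast_zmod_eq_zero_iff_dvd _ _).mpr hdvd
  have hsp : ⊤ ≤ Submodule.span (ZMod p) (Set.range bv) := by
    rintro z -
    obtain ⟨x, rfl⟩ := Ideal.Quotient.mk_surjective (I := I) z
    rw [show Ideal.Quotient.mk I x = mk x from rfl, key x]
    exact Submodule.sum_mem _ fun i _ =>
      Submodule.smul_mem _ _ (Submodule.subset_span (Set.mem_range_self i))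
  let b' : Module.Basis ι (ZMod p) (O ⧸ I) := Module.Basis.mk hli hsp
  haveI : Module.Finite (ZMod p) (O ⧸ I) := Module.Finite.of_basis b'
  have hb'b : ∀ i, b' i = bv i := fun i => Module.Basis.mk_apply hli hsp i
  have hrepr : ∀ (x : O) (i : ι), b'.repr (mk x) i = ((b.repr x i : ℤ) : ZMod p) := by
    intro x i
    have h : mk x = ∑ j, ((b.repr x j : ℤ) : ZMod p) • b' j := by
      rw [key x]
      exact Finset.sum_congr rfl fun j _ => by rw [hb'b]
    rw [h]
    exact congrFun (b'.repr_sum_self _) i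
  -- trace compatibility
  have htr : ∀ x : O,
      Algebra.trace (ZMod p) (O ⧸ I) (mk x) = ((Algebra.trace ℤ O x : ℤ) : ZMod p) := by
    intro x
    rw [Algebra.trace_eq_matrix_trace b', Algebra.trace_eq_matrix_trace b, Matrix.trace,
      Matrix.trace, Int.cast_sum]
    refine Finset.sum_congr rfl fun i _ => ?_
    simp only [Matrix.diag, Algebra.leftMulMatrix_eq_repr_mul]
    rw [show mk x * b' i = mk (x * b i) by rw [hb'b]; exact (map_mul mk x (b i)).symm, hrepr]
  -- discriminant compatibility
  have hdiscr : ((Algebra.discr ℤ b : ℤ) : ZMod p) = Algebra.discr (ZMod p) ⇑b' := by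
    rw [Algebra.discr_def, Algebra.discr_def,
      show ((Algebra.traceMatrix ℤ ⇑b).det : ZMod p)
        = ((Int.castRingHom (ZMod p)).mapMatrix (Algebra.traceMatrix ℤ ⇑b)).det from
        RingHom.map_det (Int.castRingHom (ZMod p)) _]
    congr 1
    ext i j
    simp only [RingHom.mapMatrix_apply, Matrix.map_apply, Algebra.traceMatrix_apply,
      Algebra.traceForm_apply]
    rw [show b' i * b' j = mk (b i * b j) by rw [hb'b, hb'b]; exact (map_mul mk _ _).symm, htr]
    norm_cast
  -- main bridge
  have hdet : (p : ℤ) ∣ Algebra.discr ℤ b ↔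
      ¬ (Algebra.traceForm (ZMod p) (O ⧸ I)).Nondegenerate := by
    rw [LinearMap.BilinForm.nondegenerate_iff_det_ne_zero b', not_not]
    have hmat : (LinearMap.BilinForm.toMatrix b') (Algebra.traceForm (ZMod p) (O ⧸ I))
        = Algebra.traceMatrix (ZMod p) ⇑b' := by
      ext i j
      rw [Algebra.traceForm_toMatrix, Algebra.traceMatrix_apply, Algebra.traceForm_apply]
    rw [hmat, ← Algebra.discr_def, ← hdiscr, ZMod.intCast_zmod_eq_zero_iff_dvd]
  constructor
  · -- unramified → not dvd
    intro hnotex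
    rw [hdet, not_not]
    have hsqf : Squarefree I := by
      intro J hJ
      by_contra hJu
      have hJ0 : J ≠ 0 := by
        rintro rfl
        rw [zero_mul] at hJ
        exact hIbot (by rwa [zero_dvd_iff, Ideal.zero_eq_bot] at hJ)
      obtain ⟨Q, hQirr, hQdvd⟩ := WfDvdMonoid.exists_irreducible_factor hJu hJ0
      have hQprime : Prime Q := UniqueFactorizationMonoid.irreducible_iff_prime.mp hQirr
      have hQbot : Q ≠ ⊥ := by rw [← Ideal.zero_eq_bot]; exact hQprime.ne_zero
      refine hnotex ⟨Q, (Ideal.prime_iff_isPrime hQbot).mp hQprime, ?_⟩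
      calc Q ^ 2 = Q * Q := sq Q
      _ ∣ J * J := mul_dvd_mul hQdvd hQdvd
      _ ∣ I := hJ
    haveI : IsReduced (O ⧸ I) := by
      letI : GCDMonoid (Ideal O) := UniqueFactorizationMonoid.toGCDMonoid _
      have hrad : IsRadical I := hsqf.isRadical
      have hIrad : I.IsRadical := by
        intro x hx
        obtain ⟨n, hn⟩ := Ideal.mem_radical_iff.mp hx
        have h1 : I ∣ Ideal.span {x} ^ n := by
          rw [Ideal.span_singleton_pow, Ideal.dvd_iff_le]
          exact (Ideal.span_singleton_le_iff_mem I).mpr hn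
        have h2 : I ∣ Ideal.span {x} := hrad n _ h1
        exact (Ideal.span_singleton_le_iff_mem I).mp (Ideal.dvd_iff_le.mp h2)
      have h := (RingHom.ker_isRadical_iff_reduced_of_surjective
        (Ideal.Quotient.mk_surjective (I := I))).mp
      rw [Ideal.mk_ker] at h
      exact h hIrad
    exact aux_nondeg_of_reduced p (O ⧸ I)
  · -- not dvd → unramified
    intro hndvd
    rw [hdet, not_not] at hndvd
    rintro ⟨P, hPprime, hPdvd⟩
    obtain ⟨C, hC⟩ := hPdvd
    have hI0 : I ≠ 0 := by rwa [Ideal.zero_eq_bot]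
    have hP0 : P ≠ 0 := by rintro rfl; exact hI0 (hC.trans (by ring))
    have hC0 : C ≠ 0 := by rintro rfl; exact hI0 (hC.trans (by ring))
    have hPC0 : P * C ≠ 0 := mul_ne_zero hP0 hC0
    have hPtop : P ≠ ⊤ := hPprime.ne_top
    have hne : ¬ (P * C ≤ I) := by
      intro hle
      have hdvd2 : P * (P * C) ∣ P * C := by
        have h : I ∣ P * C := Ideal.dvd_iff_le.mpr hle
        rwa [hC, show P ^ 2 * C = P * (P * C) by ring] at h
      obtain ⟨E, hE⟩ := hdvd2
      have hcan : (P * C) * 1 = (P * C) * (P * E) := by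
        conv_lhs => rw [mul_one, hE]
        ring
      have h1 : (1 : Ideal O) = P * E := mul_left_cancel₀ hPC0 hcan
      exact hPtop (Ideal.isUnit_iff.mp (IsUnit.of_mul_eq_one (a := P) E h1.symm))
    obtain ⟨x, hxPC, hxI⟩ := SetLike.not_le_iff_exists.mp hne
    have hx2 : x * x ∈ I := by
      have hdvd3 : I ∣ (P * C) * (P * C) := by
        rw [hC, show (P * C) * (P * C) = P ^ 2 * (C * C) by ring]
        exact mul_dvd_mul_left _ (Dvd.intro C rfl)
      exact (Ideal.dvd_iff_le.mp hdvd3) (Ideal.mul_mem_mul hxPC hxPC)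
    have hx0 : mk x ≠ 0 := fun h => hxI (Ideal.Quotient.eq_zero_iff_mem.mp h)
    refine hx0 (hndvd.1 (mk x) fun y => ?_)
    rw [Algebra.traceForm_apply]
    have hnil : IsNilpotent (mk x * y) := ⟨2, by
      rw [mul_pow, sq, ← map_mul, Ideal.Quotient.eq_zero_iff_mem.mpr hx2, zero_mul]⟩
    exact IsNilpotent.eq_zero (Algebra.isNilpotent_trace_of_isNilpotent hnil)

theorem stmt_3 (K : Type*) [Field K] [NumberField K] (p : ℕ) (hp : p.Prime) :
    (¬ ∃ P : Ideal (NumberField.RingOfIntegers K), P.IsPrime ∧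
        P ^ 2 ∣ Ideal.span {(p : NumberField.RingOfIntegers K)}) ↔
      ¬ (p : ℤ) ∣ NumberField.discr K := by
  classical
  haveI : Fact p.Prime := ⟨hp⟩
  haveI : Nonempty (Module.Free.ChooseBasisIndex ℤ (NumberField.RingOfIntegers K)) := by
    rw [← Fintype.card_pos_iff, ← Module.finrank_eq_card_chooseBasisIndex,
      NumberField.RingOfIntegers.rank K]
    exact Module.finrank_pos
  exact aux_main (NumberField.RingOfIntegers K) (NumberField.RingOfIntegers.basis K) p
end

section
/- Let d be a squarefree integer with d ≠ 1, and let K be a number field of degree 2 over ℚ that contains an element α with α^2 = d. Then Disc(K) = d if d ≡ 1 (mod 4), and Disc(K) = 4d otherwise. -/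
open NumberField

lemma sq_mod4 (u : ℤ) : u^2 % 4 = if u % 2 = 0 then 0 else 1 := by
  have h := Int.emod_two_eq u
  rcases h with h | h
  · simp only [h, if_pos rfl]
    obtain ⟨k, rfl⟩ : ∃ k, u = 2*k := ⟨u/2, by omega⟩
    have : (2*k)^2 = (k^2) * 4 := by ring
    simp [this, Int.mul_emod_left]
  · simp only [h, if_neg one_ne_zero]
    obtain ⟨k, rfl⟩ : ∃ k, u = 2*k+1 := ⟨u/2, by omega⟩
    have : (2*k+1)^2 = 1 + (k^2+k) * 4 := by ring
    rw [this, Int.add_mul_emod_self_right]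
    decide

lemma den_lemma (d : ℤ) (hd : Squarefree d) (r : ℚ) (k : ℤ)
    (h : (d:ℚ) * r^2 = (k:ℚ)) : ∃ m : ℤ, (m:ℚ) = r := by
  have hnum : d * r.num^2 = k * (r.den:ℤ)^2 := by
    have hden : (r.den : ℚ) ≠ 0 := by exact_mod_cast r.den_nz
    have h2 : (d:ℚ) * (r.num:ℚ)^2 = (k:ℚ) * (r.den:ℚ)^2 := by
      rw [← Rat.num_div_den r] at h
      field_simp at h
      linarith
    exact_mod_cast h2
  have hdvd : ((r.den:ℤ))^2 ∣ d * r.num^2 := ⟨k, by linarith [hnum]⟩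
  have hcop : IsCoprime ((r.den:ℤ)^2) (r.num^2) := by
    apply IsCoprime.pow
    rw [Int.isCoprime_iff_gcd_eq_one]
    simpa [Int.gcd, Nat.coprime_comm] using r.reduced
  have hdvd2 : ((r.den:ℤ))^2 ∣ d := hcop.dvd_of_dvd_mul_right hdvd
  have : IsUnit ((r.den:ℤ)) := hd _ (by rwa [← sq])
  have hden1 : r.den = 1 := by
    rcases Int.isUnit_iff.mp this with h' | h' <;> omega
  exact ⟨r.num, by rw [← Rat.num_div_den r, hden1]; simp⟩

set_option maxHeartbeats 1000000 in
theorem stmt_4 (d : ℤ) (hd : Squarefree d) (hd1 : d ≠ 1)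
    (K : Type*) [Field K] [NumberField K]
    (hdeg : Module.finrank ℚ K = 2)
    (α : K) (hα : α ^ 2 = (d : K)) :
    NumberField.discr K = if d % 4 = 1 then d else 4 * d := by
  have hd0 : d ≠ 0 := hd.ne_zero
  -- d is not a rational square
  have hirr : ∀ q : ℚ, q ^ 2 ≠ (d : ℚ) := by
    intro q hq
    obtain ⟨m, hm⟩ := den_lemma 1 squarefree_one q d (by push_cast; rw [hq]; ring)
    have hm2 : m ^ 2 = d := by rw [← hm] at hq; exact_mod_cast hq
    have hu : IsUnit m := hd m (by rw [← sq, hm2])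
    have : d = 1 := by
      rcases Int.isUnit_iff.mp hu with h' | h' <;> rw [h'] at hm2 <;> simpa using hm2.symm
    exact hd1 this
  -- α is not rational
  have hnotQ : ∀ q : ℚ, (q : K) ≠ α := by
    intro q hq
    apply hirr q
    have : ((q : K))^2 = ((d : ℚ) : K) := by rw [hq, hα]; push_cast; ring
    exact_mod_cast this
  have hα0 : α ≠ 0 := by
    intro h
    apply hirr 0
    rw [h] at hα
    exact_mod_cast hα
  -- the basis {1, α} of K over ℚ
  have hli : LinearIndependent ℚ ![(1:K), α] := by
    rw [linearIndependent_fin2]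
    refine ⟨by simpa using hα0, fun a ha => ?_⟩
    simp only [Matrix.cons_val_one, Matrix.head_cons, Matrix.cons_val_zero] at ha
    have ha0 : a ≠ 0 := by rintro rfl; simp at ha
    apply hnotQ a⁻¹
    rw [Rat.smul_def, mul_comm] at ha
    push_cast
    exact (eq_inv_of_mul_eq_one_left ha).symm
  set B : Module.Basis (Fin 2) ℚ K :=
    basisOfLinearIndependentOfCardEqFinrank hli (by simp [hdeg]) with hB
  have hB0 : B 0 = 1 := by rw [hB, coe_basisOfLinearIndependentOfCardEqFinrank]; rfl
  have hB1 : B 1 = α := by rw [hB, coe_basisOfLinearIndependentOfCardEqFinrank]; rfl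
  -- trace computations
  have htrQ : ∀ r : ℚ, Algebra.trace ℚ K ((r : ℚ) : K) = 2 * r := by
    intro r
    rw [← eq_ratCast (algebraMap ℚ K) r, Algebra.trace_algebraMap, hdeg]
    push_cast
    ring
  have htrα : Algebra.trace ℚ K α = 0 := by
    rw [Algebra.trace_eq_matrix_trace B, Matrix.trace_fin_two,
      Algebra.leftMulMatrix_eq_repr_mul, Algebra.leftMulMatrix_eq_repr_mul]
    have e0 : α * B 0 = B 1 := by rw [hB0, hB1, mul_one]
    have e1 : α * B 1 = (d : ℚ) • B 0 := by
      rw [hB0, hB1, ← sq, hα, Rat.smul_def, mul_one]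
      push_cast
      ring
    rw [e0, e1, B.repr_self, map_smul, B.repr_self]
    simp
  -- coordinate expansion
  have hrepr : ∀ x : K, x = (B.repr x 0 : ℚ) • (1:K) + (B.repr x 1 : ℚ) • α := by
    intro x
    conv_lhs => rw [← B.sum_repr x]
    rw [Fin.sum_univ_two, hB0, hB1]
  -- classification of integral elements
  have key : ∀ x : K, IsIntegral ℤ x → ∃ u v : ℤ,
      (u : ℚ) = 2 * B.repr x 0 ∧ (v : ℚ) = 2 * B.repr x 1 ∧
      u ^ 2 % 4 = (d * v ^ 2) % 4 := by
    intro x hx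
    set p : ℚ := B.repr x 0 with hp
    set q : ℚ := B.repr x 1 with hq
    -- the trace of x is 2p
    have htr : Algebra.trace ℚ K x = 2 * p := by
      conv_lhs => rw [hrepr x]
      rw [map_add, map_smul, map_smul, htrα, ← hp, ← hq]
      have : ((1:ℚ):K) = (1:K) := by push_cast; rfl
      rw [← this, htrQ]
      simp [smul_eq_mul]
      ring
    obtain ⟨u, hu⟩ : ∃ u : ℤ, (u : ℚ) = 2 * p := by
      have h1 : IsIntegral ℤ (Algebra.trace ℚ K x) := Algebra.isIntegral_trace hx
      rw [htr] at h1
      exact IsIntegrallyClosed.isIntegral_iff.mp h1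
    -- the "norm" p^2 - d q^2 is an integer
    obtain ⟨n, hn⟩ : ∃ n : ℤ, (n : ℚ) = p ^ 2 - d * q ^ 2 := by
      have hy : ((2 * p : ℚ) : K) * x - x ^ 2 = ((p ^ 2 - d * q ^ 2 : ℚ) : K) := by
        conv_lhs => rw [hrepr x, ← hp, ← hq]
        rw [Rat.smul_def, Rat.smul_def]
        push_cast
        linear_combination (-((q:K))^2) * hα
      have hyint : IsIntegral ℤ (((2 * p : ℚ) : K) * x - x ^ 2) := by
        refine IsIntegral.sub (IsIntegral.mul ?_ hx) (hx.pow 2)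
        rw [← hu]
        have : ((u : ℚ) : K) = algebraMap ℤ K u := by push_cast; rfl
        rw [this]
        exact isIntegral_algebraMap
      rw [hy] at hyint
      have : IsIntegral ℤ ((p ^ 2 - d * q ^ 2 : ℚ)) := by
        refine IsIntegral.tower_bot (algebraMap ℚ K).injective ?_
        rwa [eq_ratCast (algebraMap ℚ K)]
      exact IsIntegrallyClosed.isIntegral_iff.mp this
    -- 2q is an integer
    obtain ⟨v, hv⟩ : ∃ v : ℤ, (v : ℚ) = 2 * q := by
      obtain ⟨v, hv⟩ := den_lemma d hd (2 * q) (u ^ 2 - 4 * n) (by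
        push_cast
        linear_combination (-((u:ℚ) + 2*p)) * hu + 4 * hn)
      exact ⟨v, hv⟩
    refine ⟨u, v, hu, hv, ?_⟩
    have hZ : u ^ 2 = d * v ^ 2 + 4 * n := by
      have : ((u:ℚ)) ^ 2 = d * (v:ℚ) ^ 2 + 4 * n := by
        rw [hu, hv, hn]; ring
      exact_mod_cast this
    omega
  -- ℤ-linear independence in K
  have hliZK : LinearIndependent ℤ ![(1:K), α] := by
    refine hli.restrict_scalars ?_
    intro a b hab
    have : (a:ℚ) = (b:ℚ) := by simpa [zsmul_eq_mul] using hab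
    exact_mod_cast this
  by_cases h4 : d % 4 = 1
  · -- d ≡ 1 mod 4 : ring of integers is ℤ[(1+α)/2]
    rw [if_pos h4]
    obtain ⟨e, he⟩ : ∃ e, d = 4*e + 1 := ⟨d/4, by omega⟩
    set θ : K := (1 + α) / 2 with hθ
    have hθ2 : (2:K) * θ = 1 + α := by rw [hθ]; field_simp
    have heK : ((e:ℤ):K) * 4 = (d:K) - 1 := by
      push_cast [he]
      ring
    have hθsq : θ^2 = θ + ((e:ℤ):K) := by
      have h4θ : (2*θ)^2 = 2*(2*θ) + ((e:ℤ):K)*4 := by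
        rw [hθ2]
        linear_combination hα - heK
      linear_combination ((4:K)⁻¹) * h4θ
    have hθint : IsIntegral ℤ θ := by
      refine ⟨Polynomial.X^2 - Polynomial.X - Polynomial.C e, ?_, ?_⟩
      · have hpoly : Polynomial.X^2 - Polynomial.X - Polynomial.C e =
            Polynomial.X^2 - (Polynomial.X + Polynomial.C e) := by ring
        rw [hpoly]
        exact Polynomial.monic_X_pow_sub (by
          rw [Polynomial.degree_X_add_C]
          norm_num)
      · rw [Polynomial.eval₂_sub, Polynomial.eval₂_sub, Polynomial.eval₂_pow,
          Polynomial.eval₂_X, Polynomial.eval₂_C, eq_intCast]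
        linear_combination hθsq
    -- {1, θ} is linearly independent over ℚ
    have hliθ : LinearIndependent ℚ ![(1:K), θ] := by
      rw [linearIndependent_fin2]
      constructor
      · simp only [Matrix.cons_val_one, Matrix.head_cons, Matrix.cons_val_zero]
        intro h
        apply hnotQ (-1)
        rw [hθ] at h
        have : α = -1 := by
          field_simp at h
          linear_combination h
        rw [this]
        push_cast
        ring
      · intro a ha
        simp only [Matrix.cons_val_one, Matrix.head_cons, Matrix.cons_val_zero] at ha
        have ha0 : a ≠ 0 := by rintro rfl; simp at ha
        apply hnotQ (2/a - 1)
        rw [Rat.smul_def] at ha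
        have haK : ((a:ℚ):K) ≠ 0 := by exact_mod_cast ha0
        push_cast
        rw [eq_comm, ← sub_eq_zero]
        have h2ne : (2:K) ≠ 0 := two_ne_zero
        field_simp
        field_simp [hθ] at ha
        linear_combination 2 * ha - (a:K) * hθ2
    have hliθZ : LinearIndependent ℤ ![(1:K), θ] := by
      refine hliθ.restrict_scalars ?_
      intro a b hab
      have : (a:ℚ) = (b:ℚ) := by simpa [zsmul_eq_mul] using hab
      exact_mod_cast this
    set o1 : 𝓞 K := 1 with ho1
    set oθ : 𝓞 K := ⟨θ, hθint⟩ with hoθ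
    have hco1 : algebraMap (𝓞 K) K o1 = 1 := map_one _
    have hcoθ : algebraMap (𝓞 K) K oθ = θ := rfl
    have hliZ : LinearIndependent ℤ ![o1, oθ] := by
      refine LinearIndependent.of_comp ((algebraMap (𝓞 K) K).toIntAlgHom.toLinearMap) ?_
      have : ((algebraMap (𝓞 K) K).toIntAlgHom.toLinearMap ∘ ![o1, oθ]) = ![(1:K), θ] := by
        funext i
        fin_cases i <;> simp [hco1, hcoθ]
      rwa [this]
    have hsp : ⊤ ≤ Submodule.span ℤ (Set.range ![o1, oθ]) := by
      rintro z -
      obtain ⟨u, v, hu, hv, hmod⟩ := key ((z : K)) (RingOfIntegers.isIntegral_coe z)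
      have hsqu := sq_mod4 u
      have hsqv := sq_mod4 v
      rw [Int.mul_emod, hsqu, hsqv] at hmod
      have hpar : u % 2 = v % 2 := by
        rcases Int.emod_two_eq u with hu2 | hu2 <;>
          rcases Int.emod_two_eq v with hv2 | hv2 <;>
          simp [hu2, hv2] at hmod ⊢ <;> omega
      obtain ⟨w, hw⟩ : ∃ w, u = 2*w + v := ⟨(u-v)/2, by omega⟩
      have hps : (B.repr (z:K) 0 : ℚ) = (u:ℚ)/2 := by linarith [hu]
      have hqt : (B.repr (z:K) 1 : ℚ) = (v:ℚ)/2 := by linarith [hv]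
      have hzK : (z : K) = algebraMap (𝓞 K) K (w • o1 + v • oθ) := by
        rw [map_add, map_zsmul, map_zsmul, hco1, hcoθ]
        conv_lhs => rw [hrepr ((z:K)), hps, hqt]
        rw [Rat.smul_def, Rat.smul_def]
        have huK : ((u:ℤ):K) = 2*(w:K) + (v:K) := by push_cast [hw]; ring
        push_cast [zsmul_eq_mul]
        push_cast at huK
        have h2ne : (2:K) ≠ 0 := two_ne_zero
        field_simp
        linear_combination huK + (2*(v:K)) * hθ2
      have hz : z = w • o1 + v • oθ := RingOfIntegers.coe_injective hzK
      rw [hz]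
      refine Submodule.add_mem _ (Submodule.smul_mem _ _ ?_) (Submodule.smul_mem _ _ ?_) <;>
        apply Submodule.subset_span
      · exact ⟨0, rfl⟩
      · exact ⟨1, rfl⟩
    set bZ : Module.Basis (Fin 2) ℤ (𝓞 K) := Module.Basis.mk hliZ hsp with hbZ
    have h1 : Algebra.discr ℤ ⇑bZ = NumberField.discr K := NumberField.discr_eq_discr K bZ
    have h2 := Algebra.discr_localizationLocalization (Rₘ := ℚ) ℤ (nonZeroDivisors ℤ) K bZ
    have h3 : ⇑(bZ.localizationLocalization ℚ (nonZeroDivisors ℤ) K) = ![(1:K), θ] := by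
      funext i
      rw [Module.Basis.localizationLocalization_apply, hbZ, Module.Basis.mk_apply]
      fin_cases i <;> simp [hco1, hcoθ]
    have htrθ : Algebra.trace ℚ K θ = 1 := by
      have hθsmul : θ = (2⁻¹:ℚ) • ((1:K) + α) := by
        rw [Rat.smul_def, hθ]
        push_cast
        ring
      rw [hθsmul, map_smul, map_add, htrα]
      have : ((1:ℚ):K) = (1:K) := by push_cast; rfl
      rw [← this, htrQ]
      norm_num
    have htrθ2 : Algebra.trace ℚ K (θ * θ) = 1 + 2*(e:ℚ) := by
      have : θ * θ = θ + (((e:ℚ)):K) := by rw [← sq, hθsq]; push_cast; ring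
      rw [this, map_add, htrθ, htrQ]
    have h5 : Algebra.discr ℚ ![(1:K), θ] = (d:ℚ) := by
      rw [Algebra.discr_def, Matrix.det_fin_two]
      simp only [Algebra.traceMatrix_apply, Algebra.traceForm_apply,
        Matrix.cons_val_zero, Matrix.cons_val_one, Matrix.head_cons]
      have t1 : Algebra.trace ℚ K ((1:K) * 1) = 2 := by
        rw [mul_one]
        have : (1:K) = ((1:ℚ):K) := by norm_num
        rw [this, htrQ]
        norm_num
      have t2 : Algebra.trace ℚ K ((1:K) * θ) = 1 := by rw [one_mul, htrθ]
      have t3 : Algebra.trace ℚ K (θ * 1) = 1 := by rw [mul_one, htrθ]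
      rw [t1, t2, t3, htrθ2]
      have : (d:ℚ) = 4*(e:ℚ) + 1 := by push_cast [he]; ring
      rw [this]
      ring
    have : ((NumberField.discr K : ℤ) : ℚ) = ((d : ℤ) : ℚ) := by
      rw [← h1]
      have := h2
      rw [h3, h5, eq_intCast] at this
      push_cast
      push_cast at this
      linarith
    exact_mod_cast this
  · -- d ≡ 2, 3 mod 4 : ring of integers is ℤ[α]
    rw [if_neg h4]
    have hnd4 : d % 4 ≠ 0 := by
      intro h0
      have : IsUnit (2:ℤ) := hd 2 ⟨d/4, by omega⟩
      rcases Int.isUnit_iff.mp this with h' | h' <;> omega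
    have hαint : IsIntegral ℤ α := by
      refine ⟨Polynomial.X^2 - Polynomial.C d, ?_, ?_⟩
      · exact Polynomial.monic_X_pow_sub_C d (by norm_num)
      · rw [Polynomial.eval₂_sub, Polynomial.eval₂_pow, Polynomial.eval₂_X, Polynomial.eval₂_C,
          hα, eq_intCast, sub_self]
    set o1 : 𝓞 K := 1 with ho1
    set oα : 𝓞 K := ⟨α, hαint⟩ with hoα
    have hco1 : algebraMap (𝓞 K) K o1 = 1 := map_one _
    have hcoα : algebraMap (𝓞 K) K oα = α := rfl
    have hliZ : LinearIndependent ℤ ![o1, oα] := by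
      refine LinearIndependent.of_comp ((algebraMap (𝓞 K) K).toIntAlgHom.toLinearMap) ?_
      have : ((algebraMap (𝓞 K) K).toIntAlgHom.toLinearMap ∘ ![o1, oα]) = ![(1:K), α] := by
        funext i
        fin_cases i <;> simp [hco1, hcoα]
      rwa [this]
    have hsp : ⊤ ≤ Submodule.span ℤ (Set.range ![o1, oα]) := by
      rintro z -
      obtain ⟨u, v, hu, hv, hmod⟩ := key ((z : K)) (RingOfIntegers.isIntegral_coe z)
      have hsqu := sq_mod4 u
      have hsqv := sq_mod4 v
      rw [Int.mul_emod, hsqu, hsqv] at hmod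
      have heven : u % 2 = 0 ∧ v % 2 = 0 := by
        rcases Int.emod_two_eq u with hu2 | hu2 <;>
          rcases Int.emod_two_eq v with hv2 | hv2 <;>
          simp [hu2, hv2] at hmod ⊢ <;> omega
      obtain ⟨s, rfl⟩ : ∃ s, u = 2*s := ⟨u/2, by omega⟩
      obtain ⟨t, rfl⟩ : ∃ t, v = 2*t := ⟨v/2, by omega⟩
      have hps : (s:ℚ) = B.repr (z:K) 0 := by push_cast at hu; linarith
      have hqt : (t:ℚ) = B.repr (z:K) 1 := by push_cast at hv; linarith
      have hzK : (z : K) = algebraMap (𝓞 K) K (s • o1 + t • oα) := by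
        rw [map_add, map_zsmul, map_zsmul, hco1, hcoα]
        conv_lhs => rw [hrepr ((z:K)), ← hps, ← hqt]
        rw [Rat.smul_def, Rat.smul_def]
        push_cast [zsmul_eq_mul]
        ring
      have hz : z = s • o1 + t • oα := RingOfIntegers.coe_injective hzK
      rw [hz]
      refine Submodule.add_mem _ (Submodule.smul_mem _ _ ?_) (Submodule.smul_mem _ _ ?_) <;>
        apply Submodule.subset_span
      · exact ⟨0, rfl⟩
      · exact ⟨1, rfl⟩
    set bZ : Module.Basis (Fin 2) ℤ (𝓞 K) := Module.Basis.mk hliZ hsp with hbZ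
    have h1 : Algebra.discr ℤ ⇑bZ = NumberField.discr K := NumberField.discr_eq_discr K bZ
    have h2 := Algebra.discr_localizationLocalization (Rₘ := ℚ) ℤ (nonZeroDivisors ℤ) K bZ
    have h3 : ⇑(bZ.localizationLocalization ℚ (nonZeroDivisors ℤ) K) = ![(1:K), α] := by
      funext i
      rw [Module.Basis.localizationLocalization_apply, hbZ, Module.Basis.mk_apply]
      fin_cases i <;> simp [hco1, hcoα]
    have h5 : Algebra.discr ℚ ![(1:K), α] = 4 * (d:ℚ) := by
      rw [Algebra.discr_def, Matrix.det_fin_two]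
      simp only [Algebra.traceMatrix_apply, Algebra.traceForm_apply,
        Matrix.cons_val_zero, Matrix.cons_val_one, Matrix.head_cons]
      have t1 : Algebra.trace ℚ K (1 * 1) = 2 := by
        rw [mul_one]
        have : (1:K) = ((1:ℚ):K) := by norm_num
        rw [this, htrQ]
        norm_num
      have t2 : Algebra.trace ℚ K (1 * α) = 0 := by rw [one_mul, htrα]
      have t3 : Algebra.trace ℚ K (α * 1) = 0 := by rw [mul_one, htrα]
      have t4 : Algebra.trace ℚ K (α * α) = 2 * d := by
        have : α * α = (((d:ℚ)):K) := by rw [← sq, hα]; push_cast; ring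
        rw [this, htrQ]
      rw [t1, t2, t3, t4]
      ring
    have : ((NumberField.discr K : ℤ) : ℚ) = ((4 * d : ℤ) : ℚ) := by
      rw [← h1]
      have := h2
      rw [h3, h5, eq_intCast] at this
      push_cast
      push_cast at this
      linarith
    exact_mod_cast this
end

section
/- Every unit of the ring ℤ[√2] has the form ±(1+√2)^n for some integer n; that is, for every unit u of ℤ[√2] there exists n ∈ ℤ such that u = w^n or u = -w^n, where w is the unit 1+√2 (whose inverse is -1+√2, since (1+√2)(-1+√2) = 1), and the n-th power is taken in the unit group of ℤ[√2] (allowing negative n). -/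
/-- The fundamental unit `1 + √2` of `ℤ[√2]`, with inverse `-1 + √2`. -/
def pellUnit : (ℤ√2)ˣ where
  val := ⟨1, 1⟩
  inv := ⟨-1, 1⟩
  val_inv := by decide
  inv_val := by decide

noncomputable section AuxPell

def sol32 : Pell.Solution₁ 2 := Pell.Solution₁.mk 3 2 (by norm_num)

lemma sol32_fund : Pell.IsFundamental sol32 := by
  refine ⟨by norm_num [sol32], by norm_num [sol32], ?_⟩
  intro b hb
  have hy := Pell.Solution₁.y_ne_zero_of_one_lt_x hb
  have hprop := b.prop
  show (3 : ℤ) ≤ b.x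
  by_contra h
  push_neg at h
  have hx2 : b.x = 2 := by omega
  rw [hx2] at hprop
  have hy2 : b.y ^ 2 ≥ 1 := by
    have := sq_nonneg b.y
    rcases (sq_eq_zero_iff (a := b.y)).symm with _
    have : b.y ^ 2 ≠ 0 := pow_ne_zero 2 hy
    omega
  set k := b.y ^ 2 with hk
  omega

/-- The embedding of Pell solutions into units. -/
def solToUnit : Pell.Solution₁ 2 →* (ℤ√2)ˣ :=
  (Unitary.toUnits : unitary (ℤ√2) →* (ℤ√2)ˣ)

lemma solToUnit_val (s : Pell.Solution₁ 2) : ((solToUnit s : (ℤ√2)ˣ) : ℤ√2) = s := rfl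

lemma solToUnit_neg (s : Pell.Solution₁ 2) : solToUnit (-s) = -(solToUnit s) := by
  apply Units.ext
  rfl

lemma solToUnit_sol32 : solToUnit sol32 = pellUnit ^ 2 := by
  apply Units.ext
  show ((⟨3,2⟩ : ℤ√2)) = ((pellUnit : ℤ√2) ^ 2)
  decide

lemma norm_one_case (v : (ℤ√2)ˣ) (hv : (v : ℤ√2).norm = 1) :
    ∃ m : ℤ, v = pellUnit ^ (2 * m) ∨ v = -(pellUnit ^ (2 * m)) := by
  have hmem : (v : ℤ√2) ∈ unitary (ℤ√2) := by
    rw [← Pell.is_pell_solution_iff_mem_unitary]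
    have := hv
    rw [Zsqrtd.norm_def] at this
    ring_nf
    ring_nf at this
    linarith
  set s : Pell.Solution₁ 2 := ⟨(v : ℤ√2), hmem⟩ with hs
  have hvs : v = solToUnit s := by
    apply Units.ext
    rfl
  obtain ⟨m, hm | hm⟩ := sol32_fund.eq_zpow_or_neg_zpow s
  · refine ⟨m, Or.inl ?_⟩
    rw [hvs, hm, map_zpow, solToUnit_sol32, ← zpow_natCast, ← zpow_mul]
    norm_num
  · refine ⟨m, Or.inr ?_⟩
    rw [hvs, hm, solToUnit_neg, map_zpow, solToUnit_sol32, ← zpow_natCast, ← zpow_mul]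
    norm_num

end AuxPell

theorem stmt_5 (u : (ℤ√2)ˣ) :
    ∃ n : ℤ, u = pellUnit ^ n ∨ u = -(pellUnit ^ n) := by
  have hunit : IsUnit ((u : ℤ√2).norm) := by
    refine IsUnit.of_mul_eq_one ((↑u⁻¹ : ℤ√2).norm) ?_
    rw [← Zsqrtd.norm_mul]
    simp
  rcases Int.isUnit_iff.mp hunit with h1 | h1
  · obtain ⟨m, hm | hm⟩ := norm_one_case u h1
    · exact ⟨2 * m, Or.inl hm⟩
    · exact ⟨2 * m, Or.inr hm⟩
  · have hnp : ((pellUnit : ℤ√2)).norm = -1 := by decide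
    have h2 : ((↑(u * pellUnit) : ℤ√2)).norm = 1 := by
      rw [Units.val_mul, Zsqrtd.norm_mul, h1, hnp]; norm_num
    obtain ⟨m, hm | hm⟩ := norm_one_case (u * pellUnit) h2
    · refine ⟨2 * m - 1, Or.inl ?_⟩
      have : u = pellUnit ^ (2 * m) * pellUnit⁻¹ := by
        rw [← hm]; group
      rw [this, ← zpow_sub_one]
    · refine ⟨2 * m - 1, Or.inr ?_⟩
      have : u = -(pellUnit ^ (2 * m)) * pellUnit⁻¹ := by
        rw [← hm]; group
      rw [this, neg_mul, ← zpow_sub_one]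
end

section
/- Let F be a finite field with q elements and let d ≥ 1 be an integer. Then d times the number of monic irreducible polynomials of degree d in F[X] equals the sum over the positive divisors m of d of μ(d/m)·q^m, where μ is the Möbius function. -/
open Polynomial

/-- If `q^m - 1 ∣ q^n - 1` with `1 < q` and `0 < m`, then `m ∣ n`. -/
lemma aux_dvd_of_pow_sub_one_dvd {q m : ℕ} (hq : 1 < q) (hm : 0 < m) :
    ∀ n, q ^ m - 1 ∣ q ^ n - 1 → m ∣ n := by
  intro n
  induction n using Nat.strong_induction_on with
  | _ n ih =>
    intro h
    rcases Nat.eq_zero_or_pos n with rfl | hn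
    · exact dvd_zero m
    rcases Nat.lt_or_ge n m with hlt | hge
    · have h1 : 0 < q ^ n - 1 := by
        have : 1 < q ^ n := Nat.one_lt_pow hn.ne' hq
        omega
      have h2 : q ^ n - 1 < q ^ m - 1 := by
        have : q ^ n < q ^ m := Nat.pow_lt_pow_right hq hlt
        have : 1 ≤ q ^ n := Nat.one_le_pow _ _ (by omega)
        omega
      exact absurd (Nat.le_of_dvd h1 h) (by omega)
    · have hd : q ^ m - 1 ∣ q ^ n - q ^ (n - m) := by
        refine ⟨q ^ (n - m), ?_⟩
        rw [Nat.sub_mul, one_mul, ← pow_add]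
        congr 2
        omega
      have key : q ^ m - 1 ∣ q ^ (n - m) - 1 := by
        have h3 := Nat.dvd_sub h hd
        have h4 : 1 ≤ q ^ (n - m) := Nat.one_le_pow _ _ (by omega)
        have h5 : q ^ (n - m) ≤ q ^ n := Nat.pow_le_pow_right (by omega) (by omega)
        have h6 : 1 ≤ q ^ n := Nat.one_le_pow _ _ (by omega)
        have heq : q ^ n - 1 - (q ^ n - q ^ (n - m)) = q ^ (n - m) - 1 := by omega
        rwa [heq] at h3
      have hlt : n - m < n := by omega
      have := ih (n - m) hlt key
      have : m ∣ (n - m) + m := Nat.dvd_add this dvd_rfl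
      rwa [Nat.sub_add_cancel hge] at this

/-- A monic irreducible polynomial `f` over a finite field `F` with `q` elements
divides `X^(q^n) - X` iff its degree divides `n`. -/
lemma key_dvd (F : Type*) [Field F] [Fintype F] {n : ℕ} (hn : n ≠ 0)
    (f : Polynomial F) (hf : f.Monic) (hirr : Irreducible f) :
    f ∣ X ^ (Fintype.card F) ^ n - X ↔ f.natDegree ∣ n := by
  classical
  have hq : 1 < Fintype.card F := Fintype.one_lt_card
  have hm : 0 < f.natDegree :=
    natDegree_pos_iff_degree_pos.mpr (degree_pos_of_irreducible hirr)
  haveI := Fact.mk hirr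
  set q := Fintype.card F with hqdef
  set m := f.natDegree with hmdef
  have hf0 : f ≠ 0 := hf.ne_zero
  let K := AdjoinRoot f
  let pb : PowerBasis F K := AdjoinRoot.powerBasis hf0
  haveI : Module.Finite F K := pb.finite
  haveI : Finite K := Module.finite_of_finite F
  haveI : Fintype K := Fintype.ofFinite K
  have hcard : Fintype.card K = q ^ m := by
    rw [Module.card_fintype pb.basis, hqdef]
    congr 1
    simp [pb, AdjoinRoot.powerBasis]
    rfl
  have hdvd_iff : f ∣ X ^ q ^ n - X ↔
      (AdjoinRoot.root f) ^ q ^ n = AdjoinRoot.root f := by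
    rw [← AdjoinRoot.mk_eq_zero, map_sub, map_pow, AdjoinRoot.mk_X, sub_eq_zero]
  rw [hdvd_iff]
  constructor
  · intro hroot
    -- char p setup
    set p := ringChar F with hpdef
    haveI : CharP F p := ringChar.charP F
    haveI hpprime : Fact p.Prime := ⟨CharP.char_is_prime F p⟩
    obtain ⟨s, -, hqs⟩ := FiniteField.card F p
    have hqp : q = p ^ (s : ℕ) := hqs
    haveI : CharP K p := charP_of_injective_algebraMap (algebraMap F K).injective p
    -- the set of elements fixed by the q^n power map is a subalgebra
    let S : Subalgebra F K :=
      { carrier := {y : K | y ^ q ^ n = y}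
        mul_mem' := fun {x y} hx hy => by
          simp only [Set.mem_setOf_eq] at *
          rw [mul_pow, hx, hy]
        one_mem' := by simp
        add_mem' := fun {x y} hx hy => by
          simp only [Set.mem_setOf_eq] at *
          have : q ^ n = p ^ ((s : ℕ) * n) := by rw [hqp, ← pow_mul]
          rw [this] at hx hy ⊢
          rw [add_pow_char_pow, hx, hy]
        zero_mem' := by
          simp only [Set.mem_setOf_eq]
          exact zero_pow (by positivity)
        algebraMap_mem' := fun a => by
          simp only [Set.mem_setOf_eq]
          rw [← map_pow, FiniteField.pow_card_pow] }
    have hST : (⊤ : Subalgebra F K) ≤ S := by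
      rw [← AdjoinRoot.adjoinRoot_eq_top]
      exact Algebra.adjoin_le (Set.singleton_subset_iff.mpr hroot)
    have hall : ∀ y : K, y ^ q ^ n = y := fun y => hST (Algebra.mem_top) 
    -- take a generator of the cyclic group Kˣ
    obtain ⟨g, hg⟩ := IsCyclic.exists_generator (α := Kˣ)
    have horder : orderOf g = q ^ m - 1 := by
      rw [orderOf_eq_card_of_forall_mem_zpowers hg,
        Nat.card_units, Nat.card_eq_fintype_card, hcard]
    have hgpow : g ^ (q ^ n - 1) = 1 := by
      have h1 : (g : K) ^ q ^ n = g := hall g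
      have h2 : g ^ q ^ n = g := by ext; push_cast; exact h1
      have h3 : g ^ (q ^ n - 1) * g = g ^ q ^ n := by
        rw [← pow_succ]
        congr 1
        have : 1 ≤ q ^ n := Nat.one_le_pow _ _ (by omega)
        omega
      have h4 : g ^ (q ^ n - 1) * g = 1 * g := by rw [h3, h2, one_mul]
      exact mul_right_cancel h4
    have hdvd : q ^ m - 1 ∣ q ^ n - 1 := horder ▸ orderOf_dvd_of_pow_eq_one hgpow
    exact aux_dvd_of_pow_sub_one_dvd hq hm n hdvd
  · rintro ⟨k, rfl⟩
    have h1 := FiniteField.pow_card_pow k (AdjoinRoot.root f)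
    rwa [hcard, ← pow_mul] at h1

/-- The main counting identity: `∑_{m ∣ n} m · N_m = q^n`. -/
lemma main_count (F : Type*) [Field F] [Fintype F] {n : ℕ} (hn : n ≠ 0) :
    ∑ m ∈ n.divisors,
      (m : ℤ) * Nat.card {f : Polynomial F // f.Monic ∧ Irreducible f ∧ f.natDegree = m} =
    (Fintype.card F : ℤ) ^ n := by
  classical
  have hq : 1 < Fintype.card F := Fintype.one_lt_card
  set q := Fintype.card F with hqdef
  set P : F[X] := X ^ q ^ n - X with hPdef
  have hP0 : P ≠ 0 := FiniteField.X_pow_card_pow_sub_X_ne_zero F hn hq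
  have hPdeg : P.natDegree = q ^ n := FiniteField.X_pow_card_pow_sub_X_natDegree_eq F hn hq
  -- separability
  set p := ringChar F with hpdef
  haveI : CharP F p := ringChar.charP F
  haveI hpprime : Fact p.Prime := ⟨CharP.char_is_prime F p⟩
  obtain ⟨s, -, hqs⟩ := FiniteField.card F p
  have hqp : q = p ^ (s : ℕ) := hqs
  have hpq : p ∣ q ^ n := by
    rw [hqp, ← pow_mul]
    exact dvd_pow_self p (by positivity)
  have hPsep : P.Separable := galois_poly_separable p (q ^ n) hpq
  have hPsq : Squarefree P := hPsep.squarefree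
  set M := UniqueFactorizationMonoid.normalizedFactors P with hMdef
  have hnodup : M.Nodup :=
    (UniqueFactorizationMonoid.squarefree_iff_nodup_normalizedFactors hP0).mp hPsq
  have hmonic : ∀ g ∈ M, g.Monic := by
    intro g hg
    have h1 := UniqueFactorizationMonoid.normalize_normalized_factor g hg
    rw [← h1]
    exact monic_normalize
      (UniqueFactorizationMonoid.irreducible_of_normalized_factor g hg).ne_zero
  have hPmonic : P.Monic := by
    apply (monic_X_pow (q ^ n)).sub_of_left
    rw [degree_X, degree_X_pow]
    exact_mod_cast Nat.one_lt_pow hn hq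
  have hMmonic : M.prod.Monic := by
    have := monic_multiset_prod_of_monic M id (by simpa using hmonic)
    simpa using this
  have hprod : M.prod = P :=
    eq_of_monic_of_associated hMmonic hPmonic
      (UniqueFactorizationMonoid.prod_normalizedFactors hP0)
  have hsum : (M.map natDegree).sum = q ^ n := by
    rw [← hPdeg, ← hprod, natDegree_multiset_prod_of_monic _ hmonic]
  set Fac := M.toFinset with hFacdef
  have hsum2 : ∑ g ∈ Fac, g.natDegree = q ^ n := by
    rw [← hsum, Finset.sum]
    congr 1
    rw [hFacdef, Multiset.toFinset_val, hnodup.dedup]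
  have hmem : ∀ g ∈ Fac, g.Monic ∧ Irreducible g ∧ g ∣ P := by
    intro g hg
    rw [hFacdef, Multiset.mem_toFinset] at hg
    exact ⟨hmonic g hg, UniqueFactorizationMonoid.irreducible_of_normalized_factor g hg,
      UniqueFactorizationMonoid.dvd_of_mem_normalizedFactors hg⟩
  have hmapsto : ∀ g ∈ Fac, g.natDegree ∈ n.divisors := by
    intro g hg
    obtain ⟨h1, h2, h3⟩ := hmem g hg
    rw [Nat.mem_divisors]
    exact ⟨(key_dvd F hn g h1 h2).mp h3, hn⟩
  have hfiber : ∀ m ∈ n.divisors,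
      (Fac.filter (fun g => g.natDegree = m)).card =
        Nat.card {f : Polynomial F // f.Monic ∧ Irreducible f ∧ f.natDegree = m} := by
    intro m hmd
    rw [Nat.mem_divisors] at hmd
    have hiff : ∀ f : F[X],
        f ∈ Fac.filter (fun g => g.natDegree = m) ↔
          (f.Monic ∧ Irreducible f ∧ f.natDegree = m) := by
      intro f
      rw [Finset.mem_filter]
      constructor
      · rintro ⟨hf, hdeg⟩
        obtain ⟨h1, h2, -⟩ := hmem f hf
        exact ⟨h1, h2, hdeg⟩
      · rintro ⟨h1, h2, h3⟩
        have hdvd : f ∣ P := (key_dvd F hn f h1 h2).mpr (h3 ▸ hmd.1)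
        obtain ⟨g, hgM, hassoc⟩ :=
          UniqueFactorizationMonoid.exists_mem_normalizedFactors_of_dvd hP0 h2 hdvd
        have : f = g := eq_of_monic_of_associated h1 (hmonic g hgM) hassoc
        refine ⟨?_, h3⟩
        rw [hFacdef, Multiset.mem_toFinset, this]
        exact hgM
    have h2 : Nat.card {f : F[X] // f.Monic ∧ Irreducible f ∧ f.natDegree = m}
        = (Fac.filter (fun g => g.natDegree = m)).card := by
      rw [Nat.card_congr (Equiv.subtypeEquivRight (fun f => (hiff f).symm)),
        Nat.card_eq_fintype_card, Fintype.card_coe]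
    exact h2.symm
  -- put things together
  have hnat : ∑ m ∈ n.divisors,
      m * Nat.card {f : Polynomial F // f.Monic ∧ Irreducible f ∧ f.natDegree = m} = q ^ n := by
    rw [← hsum2, ← Finset.sum_fiberwise_of_maps_to hmapsto (fun g => g.natDegree)]
    refine Finset.sum_congr rfl (fun m hmd => ?_)
    rw [← hfiber m hmd]
    rw [Finset.sum_congr rfl (fun g hg => (Finset.mem_filter.mp hg).2), Finset.sum_const,
      smul_eq_mul, mul_comm]
  calc ∑ m ∈ n.divisors,
      (m : ℤ) * Nat.card {f : Polynomial F // f.Monic ∧ Irreducible f ∧ f.natDegree = m}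
      = ((∑ m ∈ n.divisors,
          m * Nat.card {f : Polynomial F // f.Monic ∧ Irreducible f ∧ f.natDegree = m} : ℕ) : ℤ) := by
        push_cast; rfl
    _ = ((q ^ n : ℕ) : ℤ) := by rw [hnat]
    _ = (q : ℤ) ^ n := by push_cast; rfl

theorem stmt_6 (F : Type*) [Field F] [Fintype F] (q : ℕ) (hq : Fintype.card F = q)
    (d : ℕ) (hd : 1 ≤ d) :
    (d : ℤ) * Nat.card {f : Polynomial F // f.Monic ∧ Irreducible f ∧ f.natDegree = d} =
      ∑ m ∈ d.divisors, ArithmeticFunction.moebius (d / m) * (q : ℤ) ^ m := by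
  classical
  subst hq
  have hinv := (ArithmeticFunction.sum_eq_iff_sum_mul_moebius_eq
    (R := ℤ)
    (f := fun m => (m : ℤ) *
      Nat.card {f : Polynomial F // f.Monic ∧ Irreducible f ∧ f.natDegree = m})
    (g := fun n => (Fintype.card F : ℤ) ^ n)).mp
    (fun n hn => main_count F (by omega)) d hd
  simp only [Int.cast_id] at hinv
  rw [← hinv,
    Nat.sum_divisorsAntidiagonal' (f := fun a b => (ArithmeticFunction.moebius a) *
      (Fintype.card F : ℤ) ^ b)]
end

section
/- The Prime Number Theorem is equivalent to the statement ψ(n) ~ n; precisely, π(n)·log(n)/n tends to 1 as n → ∞ if and only if ψ(n)/n tends to 1 as n → ∞, where ψ(n) = Σ_{m ≤ n} Λ(m) is the Chebyshev function. -/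
open Finset Filter Real ArithmeticFunction


noncomputable def th (n : ℕ) : ℝ := ∑ p ∈ (Finset.range (n+1)).filter Nat.Prime, Real.log p

lemma pi_eq (n : ℕ) : Nat.primeCounting n = ((Finset.range (n+1)).filter Nat.Prime).card := by
  rw [Nat.primeCounting, Nat.primeCounting', Nat.count_eq_card_filter_range]

lemma psi_split (n : ℕ) :
    (∑ m ∈ Finset.Icc 1 n, Λ m) =
      th n + ∑ m ∈ (Finset.Icc 1 n).filter (fun m => ¬ m.Prime), Λ m := by
  classical
  rw [← Finset.sum_filter_add_sum_filter_not (Finset.Icc 1 n) (fun m => m.Prime)]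
  congr 1
  have h : (Finset.Icc 1 n).filter (fun m => m.Prime) =
      (Finset.range (n+1)).filter Nat.Prime := by
    ext p
    simp only [Finset.mem_filter, Finset.mem_Icc, Finset.mem_range, Nat.lt_succ_iff]
    exact ⟨fun h => ⟨h.1.2, h.2⟩, fun h => ⟨⟨h.2.one_lt.le, h.1⟩, h.2⟩⟩
  rw [h, th]
  exact Finset.sum_congr rfl fun p hp => vonMangoldt_apply_prime (Finset.mem_filter.1 hp).2


lemma card_pppow (n : ℕ) :
    (((Finset.Icc 1 n).filter (fun m => ¬ m.Prime ∧ Λ m ≠ 0)).card : ℕ)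
      ≤ n.sqrt * Nat.log 2 n := by
  classical
  have hsub : ∀ m ∈ (Finset.Icc 1 n).filter (fun m => ¬ m.Prime ∧ Λ m ≠ 0),
      (m.minFac, m.factorization m.minFac) ∈
        Finset.Icc 1 n.sqrt ×ˢ Finset.Icc 1 (Nat.log 2 n) ∧
      m = m.minFac ^ (m.factorization m.minFac) := by
    intro m hm
    simp only [Finset.mem_filter, Finset.mem_Icc] at hm
    obtain ⟨⟨hm1, hmn⟩, hnp, hΛ⟩ := hm
    obtain ⟨p, k, hp, hk, rfl⟩ := (vonMangoldt_ne_zero_iff.1 hΛ)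
    have hp' : p.Prime := hp.nat_prime
    have hmin : (p ^ k).minFac = p := hp'.pow_minFac hk.ne'
    have hfac : (p ^ k).factorization p = k := by
      rw [hp'.factorization_pow, Finsupp.single_eq_same]
    have hk2 : 2 ≤ k := by
      rcases k with _ | _ | k
      · exact absurd hk (by omega)
      · rw [pow_one] at hnp; exact absurd hp' hnp
      · omega
    have hpsqrt : p ≤ n.sqrt := by
      rw [Nat.le_sqrt]
      calc p * p = p ^ 2 := (sq p).symm
        _ ≤ p ^ k := Nat.pow_le_pow_right hp'.pos hk2
        _ ≤ n := hmn
    have hklog : k ≤ Nat.log 2 n := by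
      have h2k : 2 ^ k ≤ n := le_trans (Nat.pow_le_pow_left hp'.two_le k) hmn
      exact (Nat.le_log_iff_pow_le one_lt_two (by omega)).2 h2k
    rw [hmin, hfac]
    refine ⟨?_, rfl⟩
    simp only [Finset.mem_product, Finset.mem_Icc]
    exact ⟨⟨hp'.pos, hpsqrt⟩, ⟨by omega, hklog⟩⟩
  calc (((Finset.Icc 1 n).filter (fun m => ¬ m.Prime ∧ Λ m ≠ 0)).card : ℕ)
      ≤ (Finset.Icc 1 n.sqrt ×ˢ Finset.Icc 1 (Nat.log 2 n)).card := by
        apply Finset.card_le_card_of_injOn (fun m => (m.minFac, m.factorization m.minFac))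
          (fun m hm => (hsub m hm).1)
        intro a ha b hb hab
        simp only [Prod.mk.injEq] at hab
        rw [(hsub a (Finset.mem_coe.1 ha)).2, (hsub b (Finset.mem_coe.1 hb)).2,
          hab.2, hab.1]
    _ = n.sqrt * Nat.log 2 n := by
        simp [Nat.card_Icc]

lemma psi_sub_th_le (n : ℕ) :
    ∑ m ∈ (Finset.Icc 1 n).filter (fun m => ¬ m.Prime), Λ m
      ≤ ((n.sqrt * Nat.log 2 n : ℕ) : ℝ) * Real.log n := by
  classical
  have hlogn : (0:ℝ) ≤ Real.log n := by
    rcases Nat.eq_zero_or_pos n with h | h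
    · simp [h]
    · exact Real.log_nonneg (by exact_mod_cast h)
  rw [← Finset.sum_filter_ne_zero, Finset.filter_filter]
  calc ∑ m ∈ (Finset.Icc 1 n).filter (fun m => ¬ m.Prime ∧ Λ m ≠ 0), Λ m
      ≤ ((Finset.Icc 1 n).filter (fun m => ¬ m.Prime ∧ Λ m ≠ 0)).card • Real.log n := by
        apply Finset.sum_le_card_nsmul
        intro m hm
        simp only [Finset.mem_filter, Finset.mem_Icc] at hm
        exact vonMangoldt_le_log.trans (Real.log_le_log (by exact_mod_cast hm.1.1)
          (by exact_mod_cast hm.1.2))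
    _ ≤ ((n.sqrt * Nat.log 2 n : ℕ) : ℝ) * Real.log n := by
        rw [nsmul_eq_mul]
        apply mul_le_mul_of_nonneg_right _ hlogn
        exact_mod_cast card_pppow n

lemma err1_tendsto :
    Tendsto (fun n : ℕ => ((n.sqrt * Nat.log 2 n : ℕ) : ℝ) * Real.log n / n)
      atTop (nhds 0) := by
  have h0 : Tendsto (fun x : ℝ => Real.log x ^ (2:ℝ) / x ^ (1/2 : ℝ)) atTop (nhds 0) :=
    (isLittleO_log_rpow_rpow_atTop 2 (by norm_num : (0:ℝ) < 1/2)).tendsto_div_nhds_zero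
  have h1 : Tendsto (fun n : ℕ => Real.log n ^ (2:ℝ) / (n:ℝ) ^ (1/2 : ℝ) * (Real.log 2)⁻¹)
      atTop (nhds 0) := by
    have := (h0.comp (tendsto_natCast_atTop_atTop (R := ℝ))).mul_const (Real.log 2)⁻¹
    simpa using this
  apply squeeze_zero' ?_ ?_ h1
  · filter_upwards [eventually_ge_atTop 1] with n hn
    have : (0:ℝ) ≤ Real.log n := Real.log_nonneg (by exact_mod_cast hn)
    positivity
  · filter_upwards [eventually_ge_atTop 2] with n hn
    have hn1 : (1:ℝ) ≤ (n:ℝ) := by exact_mod_cast hn.trans' one_le_two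
    have hlogn : (0:ℝ) ≤ Real.log n := Real.log_nonneg hn1
    have hlog2 : (0:ℝ) < Real.log 2 := Real.log_pos one_lt_two
    set s : ℝ := (n:ℝ) ^ (1/2 : ℝ) with hs
    have hspos : 0 < s := Real.rpow_pos_of_pos (by positivity) _
    have hss : s * s = (n:ℝ) := by
      rw [hs, ← Real.rpow_add (by positivity)]; norm_num
    have hsqrt : (n.sqrt : ℝ) ≤ s := by
      rw [hs, ← Real.sqrt_eq_rpow]; exact Real.nat_sqrt_le_real_sqrt
    have hlog2n : (Nat.log 2 n : ℝ) ≤ Real.log n / Real.log 2 := by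
      rw [le_div_iff₀ hlog2]
      have h2k : ((2:ℕ) ^ (Nat.log 2 n) : ℕ) ≤ n := Nat.pow_log_le_self 2 (by omega)
      have := Real.log_le_log (by positivity) (show ((2:ℕ)^(Nat.log 2 n) : ℝ) ≤ (n:ℝ) by exact_mod_cast h2k)
      rw [Real.log_pow] at this
      exact_mod_cast this
    rw [Real.rpow_two]
    push_cast
    rw [div_le_iff₀ (by positivity)]
    have key : Real.log n ^ 2 / s * (Real.log 2)⁻¹ * (n:ℝ)
        = s * (Real.log n / Real.log 2) * Real.log n := by
      rw [← hss]; field_simp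
    rw [key]
    exact mul_le_mul_of_nonneg_right
      (mul_le_mul hsqrt hlog2n (by positivity) hspos.le) hlogn

lemma th_le (n : ℕ) : th n ≤ (Nat.primeCounting n : ℝ) * Real.log n := by
  rw [pi_eq, th]
  calc ∑ p ∈ (Finset.range (n+1)).filter Nat.Prime, Real.log p
      ≤ ((Finset.range (n+1)).filter Nat.Prime).card • Real.log n := by
        apply Finset.sum_le_card_nsmul
        intro p hp
        simp only [Finset.mem_filter, Finset.mem_range, Nat.lt_succ_iff] at hp
        exact Real.log_le_log (by exact_mod_cast hp.2.pos) (by exact_mod_cast hp.1)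
    _ = _ := by rw [nsmul_eq_mul]

lemma pi_le (t : ℕ) : (Nat.primeCounting t : ℕ) ≤ t := by
  rw [pi_eq]
  calc ((Finset.range (t+1)).filter Nat.Prime).card ≤ (Finset.Ioc 0 t).card := by
        apply Finset.card_le_card
        intro p hp
        simp only [Finset.mem_filter, Finset.mem_range, Nat.lt_succ_iff] at hp
        simp only [Finset.mem_Ioc]
        exact ⟨hp.2.pos, hp.1⟩
    _ = t := by rw [Nat.card_Ioc]; omega

-- main lower bound: for 0 < ε < 1 and n ≥ 2,
-- π n * log n ≤ th n / (1-ε) + ((n:ℝ)^(1-ε)+1) * log n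
lemma key_ineq {ε : ℝ} (hε : 0 < ε) (hε1 : ε < 1) {n : ℕ} (hn : 2 ≤ n) :
    (Nat.primeCounting n : ℝ) * Real.log n
      ≤ th n / (1-ε) + ((n:ℝ)^(1-ε) + 1) * Real.log n := by
  have hnpos : (0:ℝ) < n := by exact_mod_cast (by omega : 0 < n)
  have hn1 : (1:ℝ) ≤ (n:ℝ) := by exact_mod_cast (by omega : 1 ≤ n)
  have hlogn : (0:ℝ) ≤ Real.log n := Real.log_nonneg hn1
  set t : ℕ := ⌈(n:ℝ)^(1-ε)⌉₊ with ht
  have hrpos : (0:ℝ) < (n:ℝ)^(1-ε) := Real.rpow_pos_of_pos hnpos _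
  have htn : t ≤ n := by
    rw [ht, Nat.ceil_le]
    calc (n:ℝ)^(1-ε) ≤ (n:ℝ)^(1:ℝ) :=
          Real.rpow_le_rpow_of_exponent_le hn1 (by linarith)
      _ = n := Real.rpow_one _
  have hsplit : (Finset.range (n+1)).filter Nat.Prime =
      ((Finset.range (t+1)).filter Nat.Prime) ∪ ((Finset.Ioc t n).filter Nat.Prime) := by
    rw [← Finset.filter_union]
    congr 1
    ext m
    simp only [Finset.mem_union, Finset.mem_range, Finset.mem_Ioc, Nat.lt_succ_iff]
    omega
  have hdisj : Disjoint ((Finset.range (t+1)).filter Nat.Prime)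
      ((Finset.Ioc t n).filter Nat.Prime) := by
    apply Finset.disjoint_filter_filter
    rw [Finset.disjoint_left]
    intro m hm hm'
    simp only [Finset.mem_range, Nat.lt_succ_iff] at hm
    simp only [Finset.mem_Ioc] at hm'
    omega
  set c : ℕ := ((Finset.Ioc t n).filter Nat.Prime).card with hc
  have hpi : (Nat.primeCounting n : ℕ) = Nat.primeCounting t + c := by
    rw [pi_eq, pi_eq, hsplit, Finset.card_union_of_disjoint hdisj]
  -- th n ≥ c * (1-ε) * log n
  have hth : (c:ℝ) * ((1-ε) * Real.log n) ≤ th n := by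
    calc (c:ℝ) * ((1-ε) * Real.log n) = c • ((1-ε) * Real.log n) := by rw [nsmul_eq_mul]
      _ ≤ ∑ p ∈ (Finset.Ioc t n).filter Nat.Prime, Real.log p := by
          apply Finset.card_nsmul_le_sum
          intro p hp
          simp only [Finset.mem_filter, Finset.mem_Ioc] at hp
          have hpt : ((n:ℝ)^(1-ε)) ≤ p := by
            calc ((n:ℝ)^(1-ε)) ≤ t := Nat.le_ceil _
              _ ≤ p := by exact_mod_cast hp.1.1.le
          calc (1-ε) * Real.log n = Real.log ((n:ℝ)^(1-ε)) := (Real.log_rpow hnpos _).symm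
            _ ≤ Real.log p := Real.log_le_log hrpos hpt
      _ ≤ th n := by
          apply Finset.sum_le_sum_of_subset_of_nonneg
          · rw [hsplit]; exact Finset.subset_union_right
          · intro p hp _
            simp only [Finset.mem_filter, Finset.mem_range] at hp
            exact Real.log_nonneg (by exact_mod_cast hp.2.one_lt.le)
  have htb : (t:ℝ) ≤ (n:ℝ)^(1-ε) + 1 := by
    rw [ht]
    exact (Nat.ceil_lt_add_one hrpos.le).le
  have hclog : (c:ℝ) * Real.log n ≤ th n / (1-ε) := by
    rw [le_div_iff₀ (by linarith)]
    calc (c:ℝ) * Real.log n * (1-ε) = c * ((1-ε) * Real.log n) := by ring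
      _ ≤ th n := hth
  calc (Nat.primeCounting n : ℝ) * Real.log n
      = ((Nat.primeCounting t : ℝ) + c) * Real.log n := by
        rw [hpi]; push_cast; ring
    _ ≤ (((n:ℝ)^(1-ε) + 1) + c) * Real.log n := by
        apply mul_le_mul_of_nonneg_right _ hlogn
        have : (Nat.primeCounting t : ℝ) ≤ t := by exact_mod_cast pi_le t
        linarith
    _ = c * Real.log n + ((n:ℝ)^(1-ε) + 1) * Real.log n := by ring
    _ ≤ th n / (1-ε) + ((n:ℝ)^(1-ε) + 1) * Real.log n := by linarith

lemma err2_tendsto {ε : ℝ} (hε : 0 < ε) (hε1 : ε < 1) :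
    Tendsto (fun n : ℕ => ((n:ℝ)^(1-ε) + 1) * Real.log n / n) atTop (nhds 0) := by
  have h1 : Tendsto (fun x : ℝ => Real.log x / x ^ ε) atTop (nhds 0) :=
    (isLittleO_log_rpow_atTop hε).tendsto_div_nhds_zero
  have h2 : Tendsto (fun x : ℝ => Real.log x / x ^ (1:ℝ)) atTop (nhds 0) :=
    (isLittleO_log_rpow_atTop one_pos).tendsto_div_nhds_zero
  have h3 : Tendsto (fun n : ℕ => Real.log n / (n:ℝ) ^ ε + Real.log n / (n:ℝ) ^ (1:ℝ))
      atTop (nhds 0) := by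
    have := ((h1.comp (tendsto_natCast_atTop_atTop (R := ℝ))).add
      (h2.comp (tendsto_natCast_atTop_atTop (R := ℝ))))
    simpa using this
  apply h3.congr'
  filter_upwards [eventually_ge_atTop 1] with n hn
  have hnpos : (0:ℝ) < n := by exact_mod_cast (by omega : 0 < n)
  have hεne : ((n:ℝ)^ε) ≠ 0 := (Real.rpow_pos_of_pos hnpos ε).ne'
  have hsub : (n:ℝ)^(1-ε) = (n:ℝ)^(1:ℝ) / (n:ℝ)^ε := Real.rpow_sub hnpos 1 ε
  rw [Real.rpow_one] at hsub ⊢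
  rw [hsub]
  field_simp


lemma sandwich {A B : ℕ → ℝ}
    (h1 : ∀ᶠ n in atTop, B n ≤ A n)
    (h2 : ∀ ε : ℝ, 0 < ε → ε < 1 → ∀ᶠ n in atTop, A n ≤ B n / (1-ε) + ε) :
    Tendsto A atTop (nhds 1) ↔ Tendsto B atTop (nhds 1) := by
  constructor
  · intro hA
    rw [Metric.tendsto_atTop] at hA ⊢
    intro ε' hε'
    set ε : ℝ := min (ε'/4) (1/2) with hεdef
    have hε : 0 < ε := by positivity
    have hεa : ε ≤ ε'/4 := min_le_left _ _
    have hεb : ε ≤ 1/2 := min_le_right _ _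
    have h1ε : (0:ℝ) < 1 - ε := by linarith
    obtain ⟨N1, hN1⟩ := hA ε hε
    obtain ⟨N2, hN2⟩ := eventually_atTop.mp (h1.and (h2 ε hε (by linarith)))
    refine ⟨max N1 N2, fun n hn => ?_⟩
    have hd := hN1 n (le_trans (le_max_left _ _) hn)
    obtain ⟨hBA, hA2⟩ := hN2 n (le_trans (le_max_right _ _) hn)
    rw [Real.dist_eq, abs_lt] at hd ⊢
    have hB' : (A n - ε) * (1-ε) ≤ B n := (le_div_iff₀ h1ε).mp (by linarith)
    have h5 : (1-2*ε)*(1-ε) ≤ (A n - ε)*(1-ε) :=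
      mul_le_mul_of_nonneg_right (by linarith [hd.1]) h1ε.le
    constructor
    · nlinarith [sq_nonneg ε]
    · linarith [hd.2]
  · intro hB
    rw [Metric.tendsto_atTop] at hB ⊢
    intro ε' hε'
    set ε : ℝ := min (ε'/8) (1/2) with hεdef
    have hε : 0 < ε := by positivity
    have hεa : ε ≤ ε'/8 := min_le_left _ _
    have hεb : ε ≤ 1/2 := min_le_right _ _
    have h1ε : (0:ℝ) < 1 - ε := by linarith
    obtain ⟨N1, hN1⟩ := hB ε hε
    obtain ⟨N2, hN2⟩ := eventually_atTop.mp (h1.and (h2 ε hε (by linarith)))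
    refine ⟨max N1 N2, fun n hn => ?_⟩
    have hd := hN1 n (le_trans (le_max_left _ _) hn)
    obtain ⟨hBA, hA2⟩ := hN2 n (le_trans (le_max_right _ _) hn)
    rw [Real.dist_eq, abs_lt] at hd ⊢
    constructor
    · linarith [hd.1]
    · have h5 : A n ≤ (1+ε)/(1-ε) + ε := by
        refine hA2.trans ?_
        have : B n / (1-ε) ≤ (1+ε)/(1-ε) :=
          (div_le_div_iff_of_pos_right h1ε).mpr (by linarith [hd.2])
        linarith
      have h6 : (1+ε)/(1-ε) ≤ 1+4*ε := by
        rw [div_le_iff₀ h1ε]; nlinarith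
      linarith

lemma err2_small {ε : ℝ} (hε : 0 < ε) (hε1 : ε < 1) :
    ∀ᶠ n : ℕ in atTop, ((n:ℝ)^(1-ε) + 1) * Real.log n / n < ε :=
  (err2_tendsto hε hε1).eventually_lt_const hε

lemma h1_final : ∀ᶠ n : ℕ in atTop,
    th n / (n:ℝ) ≤ (Nat.primeCounting n : ℝ) * Real.log n / n := by
  filter_upwards [eventually_ge_atTop 1] with n hn
  have hnpos : (0:ℝ) < n := by exact_mod_cast (by omega : 0 < n)
  exact div_le_div_of_nonneg_right (th_le n) hnpos.le

lemma h2_final (ε : ℝ) (hε : 0 < ε) (hε1 : ε < 1) : ∀ᶠ n : ℕ in atTop,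
    (Nat.primeCounting n : ℝ) * Real.log n / n ≤ th n / (n:ℝ) / (1-ε) + ε := by
  filter_upwards [eventually_ge_atTop 2, err2_small hε hε1] with n hn herr
  have hnpos : (0:ℝ) < n := by exact_mod_cast (by omega : 0 < n)
  calc (Nat.primeCounting n : ℝ) * Real.log n / n
      ≤ (th n / (1-ε) + ((n:ℝ)^(1-ε) + 1) * Real.log n) / n :=
        div_le_div_of_nonneg_right (key_ineq hε hε1 hn) hnpos.le
    _ = th n / (n:ℝ) / (1-ε) + ((n:ℝ)^(1-ε) + 1) * Real.log n / n := by
        rw [add_div, div_div, div_div, mul_comm (1-ε) (n:ℝ)]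
    _ ≤ th n / (n:ℝ) / (1-ε) + ε := by linarith

lemma R_tendsto : Tendsto
    (fun n : ℕ => (∑ m ∈ (Finset.Icc 1 n).filter (fun m => ¬ m.Prime), Λ m) / (n:ℝ))
    atTop (nhds 0) := by
  apply squeeze_zero' ?_ ?_ err1_tendsto
  · filter_upwards with n
    exact div_nonneg (Finset.sum_nonneg fun m _ => vonMangoldt_nonneg) (Nat.cast_nonneg n)
  · filter_upwards [eventually_ge_atTop 1] with n hn
    have hnpos : (0:ℝ) < n := by exact_mod_cast (by omega : 0 < n)
    exact div_le_div_of_nonneg_right (psi_sub_th_le n) hnpos.le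

theorem stmt_8 :
    Filter.Tendsto (fun n : ℕ => (Nat.primeCounting n : ℝ) * Real.log n / n)
        Filter.atTop (nhds 1) ↔
      Filter.Tendsto (fun n : ℕ =>
          (∑ m ∈ Finset.Icc 1 n, ArithmeticFunction.vonMangoldt m) / (n : ℝ))
        Filter.atTop (nhds 1) := by
  rw [sandwich h1_final h2_final]
  have hfun : (fun n : ℕ => (∑ m ∈ Finset.Icc 1 n, Λ m) / (n : ℝ)) =
      fun n : ℕ => th n / (n:ℝ) +
        (∑ m ∈ (Finset.Icc 1 n).filter (fun m => ¬ m.Prime), Λ m) / (n:ℝ) := by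
    funext n
    rw [psi_split n, add_div]
  constructor
  · intro hB
    rw [hfun]
    simpa using hB.add R_tendsto
  · intro hψ
    have h := hψ.sub R_tendsto
    have h2 : Tendsto (fun n : ℕ => th n / (n:ℝ)) atTop (nhds (1 - 0)) := by
      apply h.congr
      intro n
      rw [psi_split n, add_div]
      ring
    simpa using h2
end

section
/- For every integer n ≥ 1, the number of ideals I of the Gaussian integers ℤ[i] with absolute norm N(I) = n equals Σ_{d ∣ n} χ₄(d), the sum taken over the positive divisors d of n, where χ₄ is the nontrivial Dirichlet character modulo 4 (χ₄(d) = 1 if d ≡ 1 mod 4, χ₄(d) = -1 if d ≡ 3 mod 4, and χ₄(d) = 0 if d is even). This identity is the coefficient-wise form of the factorization ζ_{ℚ(i)}(s) = ζ(s)·L(χ₄, s) of the Dedekind zeta function of ℚ(i). -/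
open Zsqrtd GaussianInt

noncomputable def gb : Module.Basis (Fin 2) ℤ GaussianInt :=
  Module.Basis.ofEquivFun
    { toFun := fun x => ![x.re, x.im]
      invFun := fun f => ⟨f 0, f 1⟩
      map_add' := by intro x y; funext i; fin_cases i <;> simp
      map_smul' := by intro c x; funext i; fin_cases i <;> simp
      left_inv := fun x => by simp
      right_inv := fun f => by funext i; fin_cases i <;> simp }

instance : Module.Free ℤ GaussianInt := Module.Free.of_basis gb
instance : Module.Finite ℤ GaussianInt := Module.Finite.of_basis gb

theorem algNorm_eq (x : GaussianInt) : Algebra.norm ℤ x = x.norm := by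
  rw [Algebra.norm_eq_matrix_det gb, Matrix.det_fin_two]
  rw [Algebra.leftMulMatrix_eq_repr_mul, Algebra.leftMulMatrix_eq_repr_mul,
    Algebra.leftMulMatrix_eq_repr_mul, Algebra.leftMulMatrix_eq_repr_mul]
  simp [gb, Zsqrtd.norm, Module.Basis.ofEquivFun, Zsqrtd.re_mul, Zsqrtd.im_mul, Finsupp.linearEquivFunOnFinite]
  change (x.re * (Finsupp.single (0:Fin 2) (1:ℤ)) 0 + -(x.im * (Finsupp.single (0:Fin 2) (1:ℤ)) 1)) *
        (x.re * (Finsupp.single (1:Fin 2) (1:ℤ)) 1 + x.im * (Finsupp.single (1:Fin 2) (1:ℤ)) 0) -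
      (x.re * (Finsupp.single (1:Fin 2) (1:ℤ)) 0 + -(x.im * (Finsupp.single (1:Fin 2) (1:ℤ)) 1)) *
        (x.re * (Finsupp.single (0:Fin 2) (1:ℤ)) 1 + x.im * (Finsupp.single (0:Fin 2) (1:ℤ)) 0) = _
  simp

theorem absNorm_span (x : GaussianInt) :
    Ideal.absNorm (Ideal.span {x}) = x.norm.natAbs := by
  rw [Ideal.absNorm_span_singleton, algNorm_eq]

open Ideal

variable {m n : ℕ}

theorem span_coprime_sup (h : m.Coprime n) :
    span {(m : GaussianInt)} ⊔ span {(n : GaussianInt)} = ⊤ := by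
  rw [← Ideal.isCoprime_iff_sup_eq, Ideal.isCoprime_span_singleton_iff]
  have h1 : IsCoprime (m : ℤ) (n : ℤ) := Int.isCoprime_iff_gcd_eq_one.mpr h
  have h2 := h1.map (Int.castRingHom GaussianInt)
  simpa using h2

theorem prod_sup_eq (I : Ideal GaussianInt) (h : m.Coprime n)
    (hI : absNorm I = m * n) :
    (I ⊔ span {(m : GaussianInt)}) * (I ⊔ span {(n : GaussianInt)}) = I := by
  have htop : (I ⊔ span {(m : GaussianInt)}) ⊔ (I ⊔ span {(n : GaussianInt)}) = ⊤ := by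
    rw [sup_sup_sup_comm, sup_idem, span_coprime_sup h, sup_top_eq]
  have hle : (I ⊔ span {(m : GaussianInt)}) * (I ⊔ span {(n : GaussianInt)}) ≤ I := by
    rw [Ideal.sup_mul, Ideal.mul_sup, Ideal.mul_sup]
    have hmn : span {(m : GaussianInt)} * span {(n : GaussianInt)} ≤ I := by
      rw [Ideal.span_singleton_mul_span_singleton, ← Nat.cast_mul, ← hI]
      exact span_singleton_absNorm_le I
    exact sup_le (sup_le Ideal.mul_le_left Ideal.mul_le_left)
      (sup_le Ideal.mul_le_right hmn)
  refine le_antisymm hle ?_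
  rw [Ideal.mul_eq_inf_of_coprime htop]
  exact le_inf le_sup_left le_sup_left

theorem norm_sup_eq (I : Ideal GaussianInt) (h : m.Coprime n)
    (hI : absNorm I = m * n) (hm : m ≠ 0) (hn : n ≠ 0) :
    absNorm (I ⊔ span {(m : GaussianInt)}) = m := by
  set a := absNorm (I ⊔ span {(m : GaussianInt)}) with ha
  set b := absNorm (I ⊔ span {(n : GaussianInt)}) with hb
  have hab : a * b = m * n := by
    have hmm := _root_.map_mul (Ideal.absNorm (S := GaussianInt))
      (I ⊔ span {(m : GaussianInt)}) (I ⊔ span {(n : GaussianInt)})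
    rw [prod_sup_eq I h hI] at hmm
    rw [ha, hb, ← hmm, hI]
  have ham : a ∣ m ^ 2 := by
    have h1 : absNorm (span {(m : GaussianInt)}) = m ^ 2 := by
      rw [absNorm_span, Zsqrtd.norm_natCast]
      simp [sq, Int.natAbs_mul]
    rw [← h1]
    exact absNorm_dvd_absNorm_of_le le_sup_right
  have hbn : b ∣ n ^ 2 := by
    have h1 : absNorm (span {(n : GaussianInt)}) = n ^ 2 := by
      rw [absNorm_span, Zsqrtd.norm_natCast]
      simp [sq, Int.natAbs_mul]
    rw [← h1]
    exact absNorm_dvd_absNorm_of_le le_sup_right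
  have han : a.Coprime n := Nat.Coprime.coprime_dvd_left ham (h.pow_left 2)
  have hadm : a ∣ m := (Nat.Coprime.dvd_of_dvd_mul_right han) ⟨b, hab.symm⟩
  have hbm : b.Coprime m := Nat.Coprime.coprime_dvd_left hbn (h.symm.pow_left 2)
  have hbdn : b ∣ n := (Nat.Coprime.dvd_of_dvd_mul_right hbm)
    ⟨a, by rw [mul_comm n m, ← hab, mul_comm]⟩
  obtain ⟨c, hc⟩ := hadm
  obtain ⟨d, hd⟩ := hbdn
  have ha0 : a ≠ 0 := by
    intro h0; rw [h0, zero_mul] at hab; exact (Nat.mul_ne_zero hm hn) hab.symm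
  have hb0 : b ≠ 0 := by
    intro h0; rw [h0, mul_zero] at hab; exact (Nat.mul_ne_zero hm hn) hab.symm
  have h2 : a * b * (c * d) = a * b * 1 := by
    rw [mul_one]
    calc a * b * (c * d) = (a * c) * (b * d) := by ring
      _ = m * n := by rw [← hc, ← hd]
      _ = a * b := hab.symm
  have hcd : c * d = 1 :=
    Nat.eq_of_mul_eq_mul_left (Nat.pos_of_ne_zero (mul_ne_zero ha0 hb0)) h2
  have hc1 : c = 1 := by have := Nat.eq_one_of_mul_eq_one_right (n := d) (m := c) hcd; exact this
  rw [hc, hc1, mul_one]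
theorem mul_sup_span (I J : Ideal GaussianInt) (h : m.Coprime n)
    (hIm : absNorm I = m) (hJn : absNorm J = n) :
    I * J ⊔ span {(m : GaussianInt)} = I := by
  refine le_antisymm (sup_le Ideal.mul_le_left ?_) ?_
  · rw [← hIm]; exact span_singleton_absNorm_le I
  · have hJtop : J ⊔ span {(m : GaussianInt)} = ⊤ := by
      refine eq_top_iff.mpr ?_
      rw [← span_coprime_sup h.symm]
      refine sup_le (le_sup_of_le_left ?_) le_sup_right
      rw [← hJn]; exact span_singleton_absNorm_le J
    calc I = I * (J ⊔ span {(m : GaussianInt)}) := by rw [hJtop, Ideal.mul_top]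
    _ = I * J ⊔ I * span {(m : GaussianInt)} := Ideal.mul_sup _ _ _
    _ ≤ I * J ⊔ span {(m : GaussianInt)} := sup_le_sup_left Ideal.mul_le_right _

noncomputable def normEquiv (h : m.Coprime n) (hm : m ≠ 0) (hn : n ≠ 0) :
    {I : Ideal GaussianInt // absNorm I = m * n} ≃
      {I : Ideal GaussianInt // absNorm I = m} × {I : Ideal GaussianInt // absNorm I = n} where
  toFun I := ⟨⟨I.1 ⊔ span {(m : GaussianInt)}, norm_sup_eq I.1 h I.2 hm hn⟩,
    ⟨I.1 ⊔ span {(n : GaussianInt)}, by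
      have := norm_sup_eq I.1 h.symm (by rw [I.2, mul_comm]) hn hm
      exact this⟩⟩
  invFun P := ⟨P.1.1 * P.2.1, by
    rw [_root_.map_mul (Ideal.absNorm (S := GaussianInt)), P.1.2, P.2.2]⟩
  left_inv I := by
    ext : 1
    exact prod_sup_eq I.1 h I.2
  right_inv P := by
    obtain ⟨⟨I, hI⟩, ⟨J, hJ⟩⟩ := P
    ext : 2
    · exact mul_sup_span I J h hI hJ
    · show I * J ⊔ span {(n : GaussianInt)} = J
      rw [mul_comm]
      exact mul_sup_span J I h.symm hJ hI

theorem card_mul (h : m.Coprime n) (hm : m ≠ 0) (hn : n ≠ 0) :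
    Nat.card {I : Ideal GaussianInt // absNorm I = m * n} =
      Nat.card {I : Ideal GaussianInt // absNorm I = m} *
        Nat.card {I : Ideal GaussianInt // absNorm I = n} := by
  rw [Nat.card_congr (normEquiv h hm hn), Nat.card_prod]

theorem prime_of_norm_prime {x : GaussianInt} (hx : (Zsqrtd.norm x).natAbs.Prime) :
    Prime x := by
  rw [← UniqueFactorizationMonoid.irreducible_iff_prime]
  constructor
  · intro hu
    rw [← Zsqrtd.norm_eq_one_iff] at hu
    rw [hu] at hx
    exact Nat.not_prime_one hx
  · intro a b hab
    have h2 : (Zsqrtd.norm a).natAbs * (Zsqrtd.norm b).natAbs = (Zsqrtd.norm x).natAbs := by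
      rw [← Int.natAbs_mul, ← Zsqrtd.norm_mul, ← hab]
    rcases (Nat.Prime.eq_one_or_self_of_dvd hx _ ⟨_, h2.symm⟩ : _ ∨ _) with h | h
    · left
      rw [← Zsqrtd.norm_eq_one_iff, h]
    · right
      rw [← Zsqrtd.norm_eq_one_iff]
      have hb0 : (Zsqrtd.norm b).natAbs ≠ 0 := by
        intro h0
        rw [h0, mul_zero] at h2
        exact (hx.ne_zero) h2.symm
      have := h2
      rw [h] at this
      nlinarith [Nat.pos_of_ne_zero hb0, hx.pos]

theorem exists_gen {n : ℕ} (I : Ideal GaussianInt) (hI : absNorm I = n) :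
    ∃ g : GaussianInt, I = span {g} ∧ g ∣ (n : GaussianInt) := by
  refine ⟨Submodule.IsPrincipal.generator I, (Ideal.span_singleton_generator I).symm, ?_⟩
  rw [← Ideal.span_singleton_le_span_singleton, Ideal.span_singleton_generator I, ← hI]
  exact span_singleton_absNorm_le I

theorem norm_span_pow (q : GaussianInt) (i : ℕ) :
    absNorm (span {q} ^ i) = (Zsqrtd.norm q).natAbs ^ i := by
  rw [Ideal.span_singleton_pow, absNorm_span]
  have : Zsqrtd.norm (q ^ i) = (Zsqrtd.norm q) ^ i := map_pow Zsqrtd.normMonoidHom q i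
  rw [this, Int.natAbs_pow]

theorem card_unique {P : Ideal GaussianInt → Prop} {c : Ideal GaussianInt}
    (h : ∀ I, P I ↔ I = c) : Nat.card {I : Ideal GaussianInt // P I} = 1 := by
  rw [Nat.card_eq_one_iff_unique]
  exact ⟨⟨fun a b => Subtype.ext (by rw [(h a.1).mp a.2, (h b.1).mp b.2])⟩, ⟨⟨c, (h c).mpr rfl⟩⟩⟩

theorem card_zero {P : Ideal GaussianInt → Prop} (h : ∀ I, ¬ P I) :
    Nat.card {I : Ideal GaussianInt // P I} = 0 :=
  @Nat.card_of_isEmpty _ ⟨fun a => h a.1 a.2⟩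

-- the prime 1+i over 2
theorem prime_pi2 : Prime (⟨1, 1⟩ : GaussianInt) := by
  apply prime_of_norm_prime
  norm_num [Zsqrtd.norm]

theorem assoc_two : Associated ((⟨1, 1⟩ : GaussianInt) ^ 2) (2 : GaussianInt) := by
  refine ⟨⟨⟨0, -1⟩, ⟨0, 1⟩, by decide, by decide⟩, by decide⟩

theorem card_pow_two (k : ℕ) :
    Nat.card {I : Ideal GaussianInt // absNorm I = 2 ^ k} = 1 := by
  apply card_unique (c := span {(⟨1, 1⟩ : GaussianInt)} ^ k)
  intro I
  constructor
  · intro hI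
    obtain ⟨g, hg, hdvd⟩ := exists_gen I hI
    have h2 : g ∣ (⟨1, 1⟩ : GaussianInt) ^ (2 * k) := by
      refine hdvd.trans ?_
      have : ((2 ^ k : ℕ) : GaussianInt) = (2 : GaussianInt) ^ k := by push_cast; ring
      rw [this, pow_mul]
      exact ((Associated.pow_pow (n := k) assoc_two).symm).dvd
    obtain ⟨i, hik, hassoc⟩ := (dvd_prime_pow prime_pi2 (2 * k)).mp h2
    have hspan : I = span {(⟨1, 1⟩ : GaussianInt)} ^ i := by
      rw [hg, Ideal.span_singleton_pow, Ideal.span_singleton_eq_span_singleton.mpr hassoc]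
    have : (2 : ℕ) ^ i = 2 ^ k := by
      rw [← hI, hspan, norm_span_pow]
      norm_num [Zsqrtd.norm]
    rw [hspan, Nat.pow_right_injective le_rfl this]
  · intro hI
    rw [hI, norm_span_pow]
    norm_num [Zsqrtd.norm]

theorem card_pow_inert {p : ℕ} (hp : p.Prime) (hp3 : p % 4 = 3) (k : ℕ) :
    Nat.card {I : Ideal GaussianInt // absNorm I = p ^ k} =
      if Even k then 1 else 0 := by
  haveI : Fact p.Prime := ⟨hp⟩
  have hq : Prime ((p : ℕ) : GaussianInt) :=
    GaussianInt.prime_of_nat_prime_of_mod_four_eq_three p hp3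
  have hnorm : ((Zsqrtd.norm ((p : ℕ) : GaussianInt)).natAbs) = p ^ 2 := by
    rw [Zsqrtd.norm_natCast]
    simp [sq, Int.natAbs_mul]
  have key : ∀ I : Ideal GaussianInt, absNorm I = p ^ k →
      ∃ i, 2 * i = k ∧ I = span {((p : ℕ) : GaussianInt)} ^ i := by
    intro I hI
    obtain ⟨g, hg, hdvd⟩ := exists_gen I hI
    have h2 : g ∣ ((p : ℕ) : GaussianInt) ^ k := by
      refine hdvd.trans ?_
      have : ((p ^ k : ℕ) : GaussianInt) = ((p : ℕ) : GaussianInt) ^ k := by push_cast; ring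
      rw [this]
    obtain ⟨i, hik, hassoc⟩ := (dvd_prime_pow hq k).mp h2
    have hspan : I = span {((p : ℕ) : GaussianInt)} ^ i := by
      rw [hg, Ideal.span_singleton_pow, Ideal.span_singleton_eq_span_singleton.mpr hassoc]
    refine ⟨i, ?_, hspan⟩
    have : p ^ (2 * i) = p ^ k := by
      rw [← hI, hspan, norm_span_pow, hnorm, ← pow_mul, mul_comm]
    exact Nat.pow_right_injective hp.two_le this
  by_cases hk : Even k
  · obtain ⟨j, hj⟩ := hk
    rw [if_pos ⟨j, hj⟩]
    apply card_unique (c := span {((p : ℕ) : GaussianInt)} ^ j)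
    intro I
    constructor
    · intro hI
      obtain ⟨i, hik, hspan⟩ := key I hI
      have : i = j := by omega
      rw [hspan, this]
    · intro hI
      rw [hI, norm_span_pow, hnorm, ← pow_mul]
      congr 1
      omega
  · rw [if_neg hk]
    apply card_zero
    intro I hI
    obtain ⟨i, hik, _⟩ := key I hI
    exact hk ⟨i, by omega⟩

theorem norm_dvd_of_dvd {x y : GaussianInt} (h : x ∣ y) : Zsqrtd.norm x ∣ Zsqrtd.norm y := by
  obtain ⟨c, rfl⟩ := h; rw [Zsqrtd.norm_mul]; exact dvd_mul_right _ _

section Split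

variable {p : ℕ} (hp : p.Prime) (hp1 : p % 4 = 1) {a b : ℕ} (hab : a ^ 2 + b ^ 2 = p)

include hp hab in
theorem coprime_ab : IsCoprime (a : ℤ) (b : ℤ) := by
  rw [Int.isCoprime_iff_gcd_eq_one]
  have : Int.gcd (a : ℤ) (b : ℤ) = Nat.gcd a b := by simp [Int.gcd]
  rw [this]
  set g := Nat.gcd a b with hg
  have hga : g ∣ a := Nat.gcd_dvd_left a b
  have hgb : g ∣ b := Nat.gcd_dvd_right a b
  have hg2 : g ^ 2 ∣ p := by
    rw [← hab]
    exact dvd_add (pow_dvd_pow_of_dvd hga 2) (pow_dvd_pow_of_dvd hgb 2)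
  rcases hp.eq_one_or_self_of_dvd _ hg2 with h | h
  · nlinarith [Nat.pos_of_ne_zero (fun h0 : g = 0 => by simp [h0] at h)]
  · exfalso
    rcases hp.eq_one_or_self_of_dvd g (h ▸ dvd_pow_self g two_ne_zero) with h1 | h1
    · rw [h1] at h; simp at h; exact hp.ne_one h.symm
    · rw [h1] at h
      nlinarith [hp.two_le]

include hp hp1 hab in
theorem not_dvd_conj : ¬ ((⟨(a : ℤ), (b : ℤ)⟩ : GaussianInt) ∣ ⟨(a : ℤ), -(b : ℤ)⟩) := by
  intro hdvd
  set π : GaussianInt := ⟨(a : ℤ), (b : ℤ)⟩ with hπ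
  have h2a : π ∣ ((2 * a : ℤ) : GaussianInt) := by
    have he : ((2 * a : ℤ) : GaussianInt) = π + ⟨(a : ℤ), -(b : ℤ)⟩ := by
      ext <;> simp [hπ] <;> ring
    rw [he]
    exact dvd_add dvd_rfl hdvd
  have h2b : π ∣ ((2 * b : ℤ) : GaussianInt) := by
    have he : ((2 * b : ℤ) : GaussianInt) = (π - ⟨(a : ℤ), -(b : ℤ)⟩) * ⟨0, -1⟩ := by
      ext <;> simp [hπ, Zsqrtd.re_mul, Zsqrtd.im_mul] <;> ring
    rw [he]
    exact Dvd.dvd.mul_right (dvd_sub dvd_rfl hdvd) _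
  obtain ⟨u, v, huv⟩ := coprime_ab hp hab
  have h2 : π ∣ ((2 : ℤ) : GaussianInt) := by
    have he : ((2 : ℤ) : GaussianInt) =
        ((u : ℤ) : GaussianInt) * ((2 * a : ℤ) : GaussianInt) +
          ((v : ℤ) : GaussianInt) * ((2 * b : ℤ) : GaussianInt) := by
      rw [← Int.cast_mul, ← Int.cast_mul, ← Int.cast_add]
      congr 1
      linarith
    rw [he]
    exact dvd_add (Dvd.dvd.mul_left h2a _) (Dvd.dvd.mul_left h2b _)
  have hn : Zsqrtd.norm π ∣ Zsqrtd.norm ((2 : ℤ) : GaussianInt) := norm_dvd_of_dvd h2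
  have hnπ : Zsqrtd.norm π = (p : ℤ) := by
    simp [hπ, Zsqrtd.norm, ← hab]; push_cast; ring
  have hn2 : Zsqrtd.norm ((2 : ℤ) : GaussianInt) = 4 := by
    simp [Zsqrtd.norm]
  rw [hnπ, hn2] at hn
  have : p ∣ 4 := by exact_mod_cast hn
  have hle : p ≤ 4 := Nat.le_of_dvd (by norm_num) this
  have := hp.two_le
  interval_cases p <;> omega

end Split

set_option synthInstance.maxHeartbeats 1000000 in
theorem card_pow_split {p : ℕ} (hp : p.Prime) (hp1 : p % 4 = 1) (k : ℕ) :
    Nat.card {I : Ideal GaussianInt // absNorm I = p ^ k} = k + 1 := by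
  haveI : Fact p.Prime := ⟨hp⟩
  obtain ⟨a, b, hab⟩ := Nat.Prime.sq_add_sq (p := p) (by omega)
  set π : GaussianInt := ⟨(a : ℤ), (b : ℤ)⟩ with hπdef
  set π' : GaussianInt := ⟨(a : ℤ), -(b : ℤ)⟩ with hπ'def
  have hnπ : (Zsqrtd.norm π).natAbs = p := by
    have : Zsqrtd.norm π = (p : ℤ) := by
      simp [hπdef, Zsqrtd.norm, ← hab]; push_cast; ring
    rw [this, Int.natAbs_natCast]
  have hnπ' : (Zsqrtd.norm π').natAbs = p := by
    have : Zsqrtd.norm π' = (p : ℤ) := by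
      simp [hπ'def, Zsqrtd.norm, ← hab]; push_cast; ring
    rw [this, Int.natAbs_natCast]
  have hπp : Prime π := prime_of_norm_prime (by rw [hnπ]; exact hp)
  have hπ'p : Prime π' := prime_of_norm_prime (by rw [hnπ']; exact hp)
  have hmul : π * π' = ((p : ℕ) : GaussianInt) := by
    have hcast : ((p : ℕ) : GaussianInt) = ⟨(p : ℤ), 0⟩ := by
      ext <;> simp
    rw [hcast]
    ext
    · show (π * π').re = (p : ℤ)
      rw [Zsqrtd.re_mul, ← hab]
      simp [hπdef, hπ'def]
      push_cast
      ring
    · show (π * π').im = 0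
      rw [Zsqrtd.im_mul]
      simp [hπdef, hπ'def]
      ring
  set P : Ideal GaussianInt := span {π} with hPdef
  set Q : Ideal GaussianInt := span {π'} with hQdef
  have hPprime : Prime P := Ideal.prime_span_singleton_iff.mpr hπp
  have hQprime : Prime Q := Ideal.prime_span_singleton_iff.mpr hπ'p
  have hP0 : P ≠ 0 := hPprime.ne_zero
  have hQ0 : Q ≠ 0 := hQprime.ne_zero
  have hPQ : P ≠ Q := by
    intro h
    have : Associated π π' := Ideal.span_singleton_eq_span_singleton.mp (by rw [← hPdef, ← hQdef, h])
    exact not_dvd_conj hp hp1 hab this.dvd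
  have hnormPQ : ∀ i j : ℕ, absNorm (P ^ i * Q ^ j) = p ^ (i + j) := by
    intro i j
    rw [_root_.map_mul (Ideal.absNorm (S := GaussianInt)), hPdef, hQdef,
      norm_span_pow, norm_span_pow, hnπ, hnπ', ← pow_add]
  -- the function
  set f : Fin (k + 1) → {I : Ideal GaussianInt // absNorm I = p ^ k} :=
    fun i => ⟨P ^ (i : ℕ) * Q ^ (k - (i : ℕ)), by
      rw [hnormPQ]; congr 1; omega⟩ with hfdef
  have hinj : Function.Injective f := by
    have aux : ∀ x y : ℕ, x ≤ y → y ≤ k →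
        P ^ x * Q ^ (k - x) = P ^ y * Q ^ (k - y) → x = y := by
      intro x y hxy hyk heq
      by_contra hne
      have hsplit : P ^ y = P ^ x * P ^ (y - x) := by rw [← pow_add]; congr 1; omega
      rw [hsplit, mul_assoc] at heq
      have heq2 : Q ^ (k - x) = P ^ (y - x) * Q ^ (k - y) :=
        mul_left_cancel₀ (pow_ne_zero x hP0) heq
      have hdvdP : P ∣ Q ^ (k - x) := by
        rw [heq2]
        exact Dvd.dvd.mul_right (dvd_pow_self P (by omega)) _
      have hdvdQ : P ∣ Q := hPprime.dvd_of_dvd_pow hdvdP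
      have hle : Q ≤ P := Ideal.le_of_dvd hdvdQ
      have hQmax : Q.IsMaximal :=
        Ideal.IsPrime.isMaximal (Ideal.isPrime_of_prime hQprime) hQprime.ne_zero
      have hPne : P ≠ ⊤ := fun hT => hPprime.2.1 (Ideal.isUnit_iff.mpr hT)
      exact hPQ ((hQmax.eq_of_le hPne hle).symm)
    intro x y hxy
    have := congrArg Subtype.val hxy
    rcases le_total (x : ℕ) (y : ℕ) with h | h
    · exact Fin.ext (aux _ _ h (by omega) this)
    · exact (Fin.ext (aux _ _ h (by omega) this.symm)).symm
  have hsurj : Function.Surjective f := by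
    rintro ⟨I, hI⟩
    obtain ⟨g, hg, hdvd⟩ := exists_gen I hI
    have hdvd2 : g ∣ π ^ k * π' ^ k := by
      refine hdvd.trans ?_
      have : ((p ^ k : ℕ) : GaussianInt) = (π * π') ^ k := by
        rw [hmul]; push_cast; ring
      rw [this, mul_pow]
    obtain ⟨g₁, g₂, h₁, h₂, hgeq⟩ := exists_dvd_and_dvd_of_dvd_mul hdvd2
    obtain ⟨i, hik, hi⟩ := (dvd_prime_pow hπp k).mp h₁
    obtain ⟨j, hjk, hj⟩ := (dvd_prime_pow hπ'p k).mp h₂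
    have hIspan : I = P ^ i * Q ^ j := by
      rw [hg, hgeq, ← Ideal.span_singleton_mul_span_singleton,
        Ideal.span_singleton_eq_span_singleton.mpr hi,
        Ideal.span_singleton_eq_span_singleton.mpr hj,
        ← Ideal.span_singleton_pow, ← Ideal.span_singleton_pow, hPdef, hQdef]
    have hij : i + j = k := by
      have : p ^ (i + j) = p ^ k := by rw [← hnormPQ i j, ← hIspan, hI]
      exact Nat.pow_right_injective hp.two_le this
    refine ⟨⟨i, by omega⟩, ?_⟩
    ext : 1
    show P ^ i * Q ^ (k - i) = I
    have hki : k - i = j := by omega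
    rw [hki, hIspan]
  have := Nat.card_eq_of_bijective f ⟨hinj, hsurj⟩
  rw [← this, Nat.card_eq_fintype_card, Fintype.card_fin]

theorem chi_sum_mul {m n : ℕ} (h : m.Coprime n) :
    (∑ d ∈ (m * n).divisors, ZMod.χ₄ (d : ZMod 4)) =
      (∑ d ∈ m.divisors, ZMod.χ₄ (d : ZMod 4)) * (∑ d ∈ n.divisors, ZMod.χ₄ (d : ZMod 4)) := by
  classical
  set X : ArithmeticFunction ℤ := ⟨fun d => ZMod.χ₄ (d : ZMod 4), by decide⟩ with hX
  have hXmul : X.IsMultiplicative := by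
    constructor
    · show ZMod.χ₄ ((1 : ℕ) : ZMod 4) = 1
      rw [Nat.cast_one, map_one]
    · intro a b _
      show ZMod.χ₄ ((a * b : ℕ) : ZMod 4) = ZMod.χ₄ (a : ZMod 4) * ZMod.χ₄ (b : ZMod 4)
      rw [Nat.cast_mul, _root_.map_mul ZMod.χ₄]
  have hmult := (ArithmeticFunction.isMultiplicative_zeta.natCast.mul hXmul)
  have happ : ∀ x : ℕ, ((↑(ArithmeticFunction.zeta) : ArithmeticFunction ℤ) * X) x
      = ∑ d ∈ x.divisors, ZMod.χ₄ (d : ZMod 4) :=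
    fun x => ArithmeticFunction.coe_zeta_mul_apply
  rw [← happ, ← happ, ← happ, hmult.map_mul_of_coprime h]

theorem chi_sum_pow {p : ℕ} (hp : p.Prime) (k : ℕ) :
    (∑ d ∈ (p ^ k).divisors, ZMod.χ₄ (d : ZMod 4)) =
      ∑ i ∈ Finset.range (k + 1), (ZMod.χ₄ (p : ZMod 4)) ^ i := by
  rw [Nat.sum_divisors_prime_pow hp]
  refine Finset.sum_congr rfl fun i _ => ?_
  rw [Nat.cast_pow, map_pow]

theorem chi_sum_two (k : ℕ) :
    (∑ d ∈ ((2 : ℕ) ^ k).divisors, ZMod.χ₄ (d : ZMod 4)) = 1 := by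
  rw [chi_sum_pow Nat.prime_two]
  have h2 : ZMod.χ₄ ((2 : ℕ) : ZMod 4) = 0 := by decide
  rw [h2]
  rw [Finset.sum_eq_single 0]
  · norm_num
  · intro i _ hi
    rw [zero_pow hi]
  · intro h
    simp at h

theorem chi_sum_one_mod {p : ℕ} (hp1 : p % 4 = 1) (k : ℕ) (hp : p.Prime) :
    (∑ d ∈ (p ^ k).divisors, ZMod.χ₄ (d : ZMod 4)) = k + 1 := by
  rw [chi_sum_pow hp, ZMod.χ₄_nat_one_mod_four hp1]
  simp

theorem chi_sum_three_mod {p : ℕ} (hp1 : p % 4 = 3) (k : ℕ) (hp : p.Prime) :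
    (∑ d ∈ (p ^ k).divisors, ZMod.χ₄ (d : ZMod 4)) = if Even k then 1 else 0 := by
  rw [chi_sum_pow hp, ZMod.χ₄_nat_three_mod_four hp1, neg_one_geom_sum]
  by_cases h : Even k <;> simp [Nat.even_add_one, h]

theorem main_count_s9 : ∀ n : ℕ, 1 ≤ n →
    (Nat.card {I : Ideal GaussianInt // absNorm I = n} : ℤ) =
      ∑ d ∈ n.divisors, ZMod.χ₄ (d : ZMod 4) := by
  intro n
  induction n using Nat.recOnPosPrimePosCoprime with
  | prime_pow p k hp hk =>
    intro _
    have hcase : p = 2 ∨ p % 4 = 1 ∨ p % 4 = 3 := by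
      rcases hp.eq_two_or_odd with h | h
      · exact Or.inl h
      · omega
    rcases hcase with rfl | h1 | h3
    · rw [card_pow_two, chi_sum_two]; norm_num
    · rw [card_pow_split hp h1, chi_sum_one_mod h1 k hp]; push_cast; ring
    · rw [card_pow_inert hp h3, chi_sum_three_mod h3 k hp]; split <;> norm_num
  | zero => intro h; omega
  | one =>
    intro _
    have hc : Nat.card {I : Ideal GaussianInt // absNorm I = 1} = 1 :=
      card_unique (c := ⊤) (fun I => Ideal.absNorm_eq_one_iff)
    rw [hc, Nat.divisors_one]
    simp
  | coprime a b ha hb hab iha ihb =>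
    intro _
    rw [card_mul hab (by omega) (by omega), chi_sum_mul hab]
    push_cast
    rw [iha (by omega), ihb (by omega)]

theorem stmt_9 (n : ℕ) (hn : 1 ≤ n) :
    (Nat.card {I : Ideal GaussianInt // Nat.card (GaussianInt ⧸ I) = n} : ℤ) =
      ∑ d ∈ n.divisors, ZMod.χ₄ (d : ZMod 4) := by
  have hconv : ∀ I : Ideal GaussianInt, (Nat.card (GaussianInt ⧸ I) = n) ↔ absNorm I = n := by
    intro I
    rw [Ideal.absNorm_apply, Submodule.cardQuot_apply]
  rw [Nat.card_congr (Equiv.subtypeEquivRight hconv)]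
  exact main_count_s9 n hn
end

section
/- Cartan decomposition for GL_n over a local ring of integers: let O be a discrete valuation ring with uniformizer π and fraction field K, and let n ≥ 0. For every g ∈ GL_n(K) there exist matrices a, b ∈ GL_n(O) and a weakly decreasing function λ : {1,…,n} → ℤ such that, viewing a and b in GL_n(K) via the inclusion O ⊆ K, g = a · diag(π^{λ_1}, …, π^{λ_n}) · b, where diag(π^{λ_1}, …, π^{λ_n}) is the diagonal matrix whose i-th entry is the (possibly negative) λ_i-th power of the image of π in K. -/
open Matrix

theorem snf_dvr {O : Type*} [CommRing O] [IsDomain O] [IsDiscreteValuationRing O]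
    {π : O} (hπ : Irreducible π) {n : ℕ} (A : Matrix (Fin n) (Fin n) O)
    (hA : A.det ≠ 0) :
    ∃ (P Q : Matrix (Fin n) (Fin n) O) (_ : Invertible P) (_ : Invertible Q) (m : Fin n → ℕ),
      A = P * Matrix.diagonal (fun i => π ^ m i) * Q := by
  classical
  have hinj : Function.Injective A.mulVecLin := by
    rw [← LinearMap.ker_eq_bot, LinearMap.ker_eq_bot']
    intro x hx
    rw [mulVecLin_apply] at hx
    have h1 : A.adjugate *ᵥ (A *ᵥ x) = A.det • x := by
      rw [mulVec_mulVec, adjugate_mul, smul_mulVec, one_mulVec]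
    rw [hx, mulVec_zero] at h1
    exact ((smul_eq_zero.mp h1.symm).resolve_left hA)
  set Nsub := LinearMap.range A.mulVecLin with hNsub
  let e : (Fin n → O) ≃ₗ[O] Nsub := LinearEquiv.ofInjective A.mulVecLin hinj
  let bA : Module.Basis (Fin n) O Nsub := (Pi.basisFun O (Fin n)).map e
  obtain ⟨mm, snf⟩ := Nsub.smithNormalForm (Pi.basisFun O (Fin n))
  have hmn : mm = n := by simpa using Fintype.card_congr (Module.Basis.indexEquiv snf.bN bA)
  subst hmn
  obtain ⟨bM, bN, f, a, hsnf⟩ := snf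
  have hf : Function.Bijective f := Finite.injective_iff_bijective.mp f.injective
  let σ : Fin mm ≃ Fin mm := Equiv.ofBijective f hf
  let Pm : Matrix (Fin mm) (Fin mm) O := (Pi.basisFun O (Fin mm)).toMatrix ⇑bM
  let T : Matrix (Fin mm) (Fin mm) O := bA.toMatrix ⇑bN
  haveI hPmi : Invertible Pm := (Pi.basisFun O (Fin mm)).invertibleToMatrix bM
  haveI hTi : Invertible T := bA.invertibleToMatrix bN
  have hbA : ∀ k, (bA k : Fin mm → O) = A *ᵥ Pi.single k 1 := by
    intro k
    show ((e ((Pi.basisFun O (Fin mm)) k) : Nsub) : Fin mm → O) = _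
    rw [LinearEquiv.ofInjective_apply, mulVecLin_apply, Pi.basisFun_apply]
  have key : A * T = Pm.submatrix id ⇑σ * Matrix.diagonal a := by
    ext i j
    have h2 : (bN j : Fin mm → O) = ∑ k, T k j • (bA k : Fin mm → O) := by
      conv_lhs => rw [← bA.sum_toMatrix_smul_self ⇑bN j]
      push_cast
      rfl
    have h3 : (bN j : Fin mm → O) = A *ᵥ fun k => T k j := by
      rw [h2]
      simp only [hbA]
      funext i
      simp [mulVec, dotProduct, Pi.single_apply, mul_comm]
    have h4 := congrFun (hsnf j) i
    rw [h3] at h4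
    have h5 : (A * T) i j = (A *ᵥ fun k => T k j) i := by
      simp [mul_apply, mulVec, dotProduct]
    rw [h5, h4]
    simp [mul_diagonal, Pm, Module.Basis.toMatrix_apply, σ, mul_comm]
  -- each a i is nonzero
  have ha : ∀ i, a i ≠ 0 := by
    have hdet : A.det * T.det ≠ 0 :=
      mul_ne_zero hA (Matrix.isUnit_det_of_invertible T).ne_zero
    intro i hai
    apply hdet
    rw [← det_mul, key, det_mul, det_diagonal,
      Finset.prod_eq_zero (Finset.mem_univ i) hai, mul_zero]
  choose mfun u hu using fun i => IsDiscreteValuationRing.eq_unit_mul_pow_irreducible (ha i) hπ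
  haveI hQinv : Invertible (Pm.submatrix id ⇑σ) := by
    refine ⟨(⅟Pm).submatrix ⇑σ id, ?_, ?_⟩
    · have := Matrix.submatrix_mul_equiv (⅟Pm) Pm ⇑σ (Equiv.refl (Fin mm)) ⇑σ
      simpa using this
    · have := Matrix.submatrix_mul_equiv Pm (⅟Pm) id σ id
      simpa using this
  haveI hUinv : Invertible (Matrix.diagonal fun i => (u i : O)) := by
    refine ⟨Matrix.diagonal fun i => ((u i)⁻¹ : Oˣ), ?_, ?_⟩
    · rw [diagonal_mul_diagonal]
      have h6 : (fun i => ((u i)⁻¹ : Oˣ) * (u i : O)) = fun _ => (1 : O) :=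
        funext fun i => by simp
      rw [h6, diagonal_one]
    · rw [diagonal_mul_diagonal]
      have h6 : (fun i => (u i : O) * ((u i)⁻¹ : Oˣ)) = fun _ => (1 : O) :=
        funext fun i => by simp
      rw [h6, diagonal_one]
  refine ⟨Pm.submatrix id ⇑σ * Matrix.diagonal (fun i => (u i : O)), ⅟T,
    invertibleMul _ _, invertibleInvOf, mfun, ?_⟩
  have hD : Matrix.diagonal a =
      Matrix.diagonal (fun i => (u i : O)) * Matrix.diagonal (fun i => π ^ mfun i) := by
    rw [diagonal_mul_diagonal]
    exact congrArg _ (funext fun i => hu i)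
  have hAT : A = Pm.submatrix id ⇑σ * Matrix.diagonal a * ⅟T := by
    rw [← key, Matrix.mul_assoc, mul_invOf_self, Matrix.mul_one]
  rw [hAT, hD]
  simp [Matrix.mul_assoc]

theorem snf_dvr_sorted {O : Type*} [CommRing O] [IsDomain O] [IsDiscreteValuationRing O]
    {π : O} (hπ : Irreducible π) {n : ℕ} (A : Matrix (Fin n) (Fin n) O)
    (hA : A.det ≠ 0) :
    ∃ (P Q : Matrix (Fin n) (Fin n) O) (_ : Invertible P) (_ : Invertible Q) (m : Fin n → ℕ),
      Antitone m ∧ A = P * Matrix.diagonal (fun i => π ^ m i) * Q := by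
  classical
  obtain ⟨P, Q, hP, hQ, m, hAeq⟩ := snf_dvr hπ A hA
  let τ : Equiv.Perm (Fin n) := Tuple.sort (fun i => (-(m i : ℤ)))
  have hmono := Tuple.monotone_sort (fun i => (-(m i : ℤ)))
  have hanti : Antitone (m ∘ ⇑τ) := by
    intro i j hij
    have := hmono hij
    simp only [Function.comp_apply, neg_le_neg_iff] at this
    exact_mod_cast this
  let E : Matrix (Fin n) (Fin n) O := (1 : Matrix (Fin n) (Fin n) O).submatrix ⇑τ id
  let F : Matrix (Fin n) (Fin n) O := (1 : Matrix (Fin n) (Fin n) O).submatrix id ⇑τ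
  have hEF : E * F = 1 := by
    have := Matrix.submatrix_mul_equiv (1 : Matrix (Fin n) (Fin n) O)
      (1 : Matrix (Fin n) (Fin n) O) ⇑τ (Equiv.refl (Fin n)) ⇑τ
    simpa [E, F] using this
  have hFE : F * E = 1 := by
    have := Matrix.submatrix_mul_equiv (1 : Matrix (Fin n) (Fin n) O)
      (1 : Matrix (Fin n) (Fin n) O) id τ id
    simpa [E, F] using this
  have hdiag : ∀ d : Fin n → O,
      E * Matrix.diagonal d * F = Matrix.diagonal (d ∘ ⇑τ) := by
    intro d
    have h1 : E * Matrix.diagonal d = (Matrix.diagonal d).submatrix ⇑τ id := by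
      have := Matrix.submatrix_mul_equiv (1 : Matrix (Fin n) (Fin n) O)
        (Matrix.diagonal d) ⇑τ (Equiv.refl (Fin n)) id
      simpa [E] using this
    have h2 : (Matrix.diagonal d).submatrix ⇑τ id * F =
        (Matrix.diagonal d).submatrix ⇑τ ⇑τ := by
      have := Matrix.submatrix_mul_equiv (Matrix.diagonal d)
        (1 : Matrix (Fin n) (Fin n) O) ⇑τ (Equiv.refl (Fin n)) ⇑τ
      simpa [F] using this
    rw [h1, h2, Matrix.submatrix_diagonal_equiv]
  refine ⟨P * F, E * Q, ⟨E * ⅟P, ?_, ?_⟩, ⟨⅟Q * F, ?_, ?_⟩, m ∘ ⇑τ, hanti, ?_⟩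
  · rw [Matrix.mul_assoc, ← Matrix.mul_assoc (⅟P), invOf_mul_self, Matrix.one_mul, hEF]
  · rw [Matrix.mul_assoc, ← Matrix.mul_assoc F, hFE, Matrix.one_mul, mul_invOf_self]
  · rw [Matrix.mul_assoc, ← Matrix.mul_assoc F, hFE, Matrix.one_mul, invOf_mul_self]
  · rw [Matrix.mul_assoc, ← Matrix.mul_assoc Q, mul_invOf_self, Matrix.one_mul, hEF]
  · have hd : Matrix.diagonal (fun i => π ^ m i) =
        F * Matrix.diagonal (fun i => π ^ (m ∘ ⇑τ) i) * E := by
      have := hdiag (fun i => π ^ m i)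
      have h3 : (fun i => π ^ (m ∘ ⇑τ) i) = (fun i => π ^ m i) ∘ ⇑τ := rfl
      rw [h3, ← this, Matrix.mul_assoc E, ← Matrix.mul_assoc F, hFE, Matrix.one_mul,
        Matrix.mul_assoc, hFE, Matrix.mul_one]
    rw [hAeq, hd]
    simp [Matrix.mul_assoc]

theorem stmt_18 (O : Type*) [CommRing O] [IsDomain O] [IsDiscreteValuationRing O]
    (π : O) (hπ : Irreducible π)
    (K : Type*) [Field K] [Algebra O K] [IsFractionRing O K]
    (n : ℕ) (g : GL (Fin n) K) :
    ∃ (a b : GL (Fin n) O) (lam : Fin n → ℤ), Antitone lam ∧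
      Units.val g =
        (Units.val a).map (algebraMap O K) *
          Matrix.diagonal (fun i => algebraMap O K π ^ lam i) *
          (Units.val b).map (algebraMap O K) := by
  classical
  obtain ⟨d, hd⟩ := IsLocalization.exist_integer_multiples_of_finite
    (nonZeroDivisors O) (fun p : Fin n × Fin n => Units.val g p.1 p.2)
  set φ := algebraMap O K with hφ
  have hd' : ∀ p : Fin n × Fin n, ∃ y : O, φ y = (d : O) • Units.val g p.1 p.2 := fun p => hd p
  choose c hc using hd'
  have hd0 : (d : O) ≠ 0 := nonZeroDivisors.coe_ne_zero d
  obtain ⟨NN, u, hu⟩ := IsDiscreteValuationRing.eq_unit_mul_pow_irreducible hd0 hπ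
  have hφinj : Function.Injective φ := IsFractionRing.injective O K
  have hπK : φ π ≠ 0 := fun h => hπ.ne_zero (hφinj (by simpa using h))
  let A : Matrix (Fin n) (Fin n) O := Matrix.of fun i j => (↑u⁻¹ : O) * c (i, j)
  have hAmap : ∀ i j, φ (A i j) = φ π ^ NN * Units.val g i j := by
    intro i j
    have h1 : φ (A i j) = φ (↑u⁻¹ : O) * ((d : O) • Units.val g i j) := by
      show φ ((↑u⁻¹ : O) * c (i, j)) = _
      rw [_root_.map_mul, hc (i, j)]
    rw [h1, Algebra.smul_def, ← hφ, ← mul_assoc, ← _root_.map_mul, hu]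
    congr 2
    rw [← mul_assoc]
    simp
  have hmapA : A.map φ = (φ π ^ NN) • Units.val g := by
    ext i j
    simp [hAmap, Matrix.smul_apply]
  have hgdet : (Units.val g).det ≠ 0 :=
    Matrix.det_ne_zero_of_right_inverse (by exact_mod_cast g.mul_inv)
  have hdetmap : φ A.det = (φ π ^ NN) ^ n * (Units.val g).det := by
    rw [RingHom.map_det, RingHom.mapMatrix_apply, hmapA, Matrix.det_smul]
    simp
  have hAdet : A.det ≠ 0 := by
    intro h
    apply mul_ne_zero (pow_ne_zero n (pow_ne_zero NN hπK)) hgdet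
    rw [← hdetmap, h, map_zero]
  obtain ⟨P, Q, hP, hQ, m, hanti, hAeq⟩ := snf_dvr_sorted hπ A hAdet
  let lam : Fin n → ℤ := fun i => (m i : ℤ) - NN
  have hlam : Antitone lam := fun i j hij =>
    sub_le_sub_right (by exact_mod_cast hanti hij) _
  refine ⟨⟨P, ⅟P, mul_invOf_self P, invOf_mul_self P⟩,
    ⟨Q, ⅟Q, mul_invOf_self Q, invOf_mul_self Q⟩, lam, hlam, ?_⟩
  have hden : (φ π ^ NN) ≠ 0 := pow_ne_zero _ hπK
  have h2 : A.map φ = P.map φ * Matrix.diagonal (fun i => φ π ^ m i) * Q.map φ := by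
    rw [hAeq, Matrix.map_mul, Matrix.map_mul]
    congr 2
    rw [Matrix.diagonal_map (map_zero φ)]
    congr 1
    funext i
    simp
  have h3 : Units.val g = (φ π ^ NN)⁻¹ • A.map φ := by
    rw [hmapA, smul_smul, inv_mul_cancel₀ hden, one_smul]
  rw [h3, h2, ← Matrix.smul_mul, ← Matrix.mul_smul]
  congr 2
  ext i j
  rcases eq_or_ne i j with rfl | hij
  · rw [Matrix.smul_apply, Matrix.diagonal_apply_eq, Matrix.diagonal_apply_eq]
    show (φ π ^ NN)⁻¹ * φ π ^ m i = φ π ^ ((m i : ℤ) - (NN : ℤ))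
    rw [zpow_sub₀ hπK, zpow_natCast, zpow_natCast, div_eq_mul_inv, mul_comm]
  · rw [Matrix.smul_apply, Matrix.diagonal_apply_ne _ hij, Matrix.diagonal_apply_ne _ hij,
      smul_zero]
end

section
/- Let V be a finite-dimensional complex vector space and let φ be a unipotent endomorphism of V, i.e. φ - id is nilpotent. Let m be an integer with m ≥ dim V, and let J be the endomorphism of ℂ^m given by the m×m unipotent Jordan block, i.e. the matrix with 1's on the diagonal, 1's on the superdiagonal, and 0's elsewhere. Then the fixed subspace of the endomorphism φ ⊗ J of V ⊗ ℂ^m, i.e. the eigenspace of φ ⊗ J for the eigenvalue 1, has dimension equal to dim V. -/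
open TensorProduct Module

theorem stmt_19 (V : Type*) [AddCommGroup V] [Module ℂ V] [FiniteDimensional ℂ V]
    (φ : V →ₗ[ℂ] V) (hφ : IsNilpotent (φ - LinearMap.id))
    (m : ℕ) (hm : Module.finrank ℂ V ≤ m)
    (J : (Fin m → ℂ) →ₗ[ℂ] (Fin m → ℂ))
    (hJ : J = Matrix.toLin' (Matrix.of fun i j : Fin m =>
      if j = i then 1 else if (j : ℕ) = (i : ℕ) + 1 then 1 else 0)) :
    Module.finrank ℂ (LinearMap.ker (TensorProduct.map φ J - LinearMap.id)) =
      Module.finrank ℂ V := by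
  classical
  -- J applied pointwise
  have hJc : ∀ (c : Fin m → ℂ) (k : Fin m),
      J c k = c k + (if h : (k : ℕ) + 1 < m then c ⟨k + 1, h⟩ else 0) := by
    intro c k
    subst hJ
    rw [Matrix.toLin'_apply, Matrix.mulVec, dotProduct]
    by_cases h : (k : ℕ) + 1 < m
    · rw [dif_pos h]
      have : ∀ j : Fin m, (Matrix.of fun i j : Fin m =>
          if j = i then (1:ℂ) else if (j : ℕ) = (i : ℕ) + 1 then 1 else 0) k j * c j
          = (if j = k then c j else 0) + (if j = ⟨(k:ℕ)+1, h⟩ then c j else 0) := by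
        intro j
        simp only [Matrix.of_apply]
        rcases eq_or_ne j k with rfl | hjk
        · have : ¬ (j = ⟨(j:ℕ)+1, h⟩) := by
            simp only [Fin.ext_iff]; omega
          simp [this]
        · rcases eq_or_ne j ⟨(k:ℕ)+1, h⟩ with rfl | hj2
          · simp [hjk, Fin.ext_iff]
          · have : ¬ ((j:ℕ) = (k:ℕ) + 1) := by
              intro he; exact hj2 (Fin.ext he)
            simp [hjk, this]
            exact fun h' => absurd h' hj2
      rw [Finset.sum_congr rfl fun j _ => this j, Finset.sum_add_distrib,
        Finset.sum_ite_eq' , Finset.sum_ite_eq']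
      simp
    · rw [dif_neg h]
      have : ∀ j : Fin m, (Matrix.of fun i j : Fin m =>
          if j = i then (1:ℂ) else if (j : ℕ) = (i : ℕ) + 1 then 1 else 0) k j * c j
          = (if j = k then c j else 0) := by
        intro j
        simp only [Matrix.of_apply]
        rcases eq_or_ne j k with rfl | hjk
        · simp
        · have : ¬ ((j:ℕ) = (k:ℕ) + 1) := by have := j.isLt; omega
          simp [hjk, this]
      rw [Finset.sum_congr rfl fun j _ => this j, Finset.sum_ite_eq']
      simp
  -- φ is a unit
  have hu : IsUnit φ := by
    have := hφ.isUnit_add_one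
    rwa [show φ - LinearMap.id + 1 = φ by rw [Module.End.one_eq_id]; abel] at this
  obtain ⟨u, hu⟩ := hu
  set ψ : V →ₗ[ℂ] V := ↑u⁻¹ with hψ
  have hψφ : ψ ∘ₗ φ = LinearMap.id := by
    rw [← hu]; exact_mod_cast u.inv_mul
  have hφψ : φ ∘ₗ ψ = LinearMap.id := by
    rw [← hu]; exact_mod_cast u.mul_inv
  set T : V →ₗ[ℂ] V := ψ - LinearMap.id with hT
  have hφT : φ ∘ₗ (LinearMap.id + T) = LinearMap.id := by
    rw [hT]; simpa using hφψ
  have hTnil : IsNilpotent T := by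
    have hcomm : Commute ψ (φ - LinearMap.id) := by
      have h1 : Commute φ (φ - LinearMap.id) := by
        exact (Commute.refl φ).sub_right (by simp [Commute, SemiconjBy, Module.End.mul_eq_comp])
      have : Commute (u : V →ₗ[ℂ] V) (φ - LinearMap.id) := hu ▸ h1
      exact this.units_inv_left
    have h2 : T = ψ * (LinearMap.id - φ) := by
      have h3 : ψ * φ = LinearMap.id := hψφ
      rw [mul_sub, h3, show ψ * LinearMap.id = ψ by simp [Module.End.mul_eq_comp]]
    rw [h2]
    have : IsNilpotent (LinearMap.id - φ : V →ₗ[ℂ] V) := by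
      have := hφ.neg
      simpa using this
    exact Commute.isNilpotent_mul_left (by simpa using hcomm.neg_right) this
  have hTm : T ^ m = 0 := by
    have h1 : (T : Module.End ℂ V) ^ finrank ℂ V = 0 := by
      have hc := hTnil.charpoly_eq_X_pow_finrank
      have := LinearMap.aeval_self_charpoly T
      rw [hc] at this
      simpa using this
    exact pow_eq_zero_of_le hm h1
  -- component maps
  set e : Fin m → (Fin m → ℂ) := fun i => Pi.single i 1 with he
  set F : ℕ → (V ⊗[ℂ] (Fin m → ℂ)) →ₗ[ℂ] V := fun k =>
    if h : k < m then
      (TensorProduct.rid ℂ V).toLinearMap ∘ₗ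
        TensorProduct.map LinearMap.id (LinearMap.proj (⟨k, h⟩ : Fin m))
    else 0 with hF
  have hFtmul : ∀ (k : ℕ) (h : k < m) (v : V) (c : Fin m → ℂ),
      F k (v ⊗ₜ c) = c ⟨k, h⟩ • v := by
    intro k h v c
    simp [hF, dif_pos h]
  -- identity: x = ∑ i, F i x ⊗ e i
  have hrec : ∀ x : V ⊗[ℂ] (Fin m → ℂ),
      x = ∑ i : Fin m, (F i x) ⊗ₜ[ℂ] e i := by
    suffices hid : (LinearMap.id : V ⊗[ℂ] (Fin m → ℂ) →ₗ[ℂ] _) =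
        ∑ i : Fin m, (TensorProduct.mk ℂ V (Fin m → ℂ)).flip (e i) ∘ₗ F ((i : ℕ)) by
      intro x
      conv_lhs => rw [← LinearMap.id_apply (R := ℂ) x, hid]
      simp [LinearMap.sum_apply]
    · apply TensorProduct.ext'
      intro v c
      simp only [LinearMap.id_apply, LinearMap.sum_apply, LinearMap.coe_comp,
        Function.comp_apply, LinearMap.flip_apply, TensorProduct.mk_apply]
      have : ∀ i : Fin m, F (i : ℕ) (v ⊗ₜ c) = c i • v := by
        intro i
        rw [hFtmul _ i.isLt]
      rw [Finset.sum_congr rfl fun i _ => by rw [this i]]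
      have hc : c = ∑ i : Fin m, c i • e i := by
        rw [he]
        ext j
        simp [Pi.single_apply]
      conv_lhs => rw [hc]
      rw [TensorProduct.tmul_sum]
      exact Finset.sum_congr rfl fun i _ => by
        rw [TensorProduct.tmul_smul, TensorProduct.smul_tmul']
  -- key relation
  have hFJ : ∀ k : ℕ, F k ∘ₗ TensorProduct.map φ J = φ ∘ₗ F k + φ ∘ₗ F (k + 1) := by
    intro k
    by_cases h : k < m
    · apply TensorProduct.ext'
      intro v c
      simp only [LinearMap.coe_comp, Function.comp_apply, TensorProduct.map_tmul,
        LinearMap.add_apply]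
      rw [hFtmul _ h, hJc]
      by_cases h2 : k + 1 < m
      · rw [dif_pos h2, hFtmul _ h, hFtmul _ h2]
        simp [add_smul, map_add, map_smul]
      · rw [dif_neg h2]
        have : F (k+1) = 0 := by rw [hF]; exact dif_neg h2
        simp [this, hFtmul _ h, map_smul]
    · have h0 : F k = 0 := by rw [hF]; exact dif_neg h
      have h1 : F (k+1) = 0 := by rw [hF]; exact dif_neg (by omega)
      simp [h0, h1]
  -- the embedding A
  set A : V →ₗ[ℂ] V ⊗[ℂ] (Fin m → ℂ) :=
    ∑ i : Fin m, (TensorProduct.mk ℂ V (Fin m → ℂ)).flip (e i) ∘ₗ T ^ (i : ℕ) with hA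
  have hAapp : ∀ v, A v = ∑ i : Fin m, (T ^ (i:ℕ)) v ⊗ₜ[ℂ] e i := by
    intro v; simp [hA]
  have hFA : ∀ (k : ℕ) (v : V), F k (A v) = (T ^ k) v := by
    intro k v
    by_cases h : k < m
    · rw [hAapp, map_sum]
      have : ∀ i : Fin m, F k ((T ^ (i:ℕ)) v ⊗ₜ[ℂ] e i)
          = (if i = (⟨k, h⟩ : Fin m) then (T ^ (i:ℕ)) v else 0) := by
        intro i
        rw [hFtmul _ h]
        rcases eq_or_ne i ⟨k, h⟩ with rfl | hne
        · simp [he, Pi.single_apply]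
        · have hne' : (⟨k, h⟩ : Fin m) ≠ i := fun hh => hne hh.symm
          simp [he, Pi.single_apply, hne, hne']
      rw [Finset.sum_congr rfl fun i _ => this i, Finset.sum_ite_eq']
      simp
    · have h0 : F k = 0 := by rw [hF]; exact dif_neg h
      have : (T : Module.End ℂ V) ^ k = 0 := pow_eq_zero_of_le (by omega) hTm
      simp [h0, this]
  -- A maps into kernel
  have hAker : ∀ v, A v ∈ LinearMap.ker (TensorProduct.map φ J - LinearMap.id) := by
    intro v
    rw [LinearMap.mem_ker, LinearMap.sub_apply, LinearMap.id_apply, sub_eq_zero]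
    conv_lhs => rw [hrec (TensorProduct.map φ J (A v))]
    conv_rhs => rw [hrec (A v)]
    apply Finset.sum_congr rfl
    intro i _
    congr 1
    have := congrArg (fun f => f (A v)) (hFJ (i : ℕ))
    simp only [LinearMap.coe_comp, Function.comp_apply, LinearMap.add_apply] at this
    rw [this, hFA, hFA]
    have : φ ((T ^ (i:ℕ)) v) + φ ((T ^ ((i:ℕ) + 1)) v)
        = (φ ∘ₗ (LinearMap.id + T)) ((T ^ (i:ℕ)) v) := by
      simp only [pow_succ', Module.End.mul_eq_comp, LinearMap.coe_comp,
        Function.comp_apply, map_add, LinearMap.add_apply, LinearMap.id_apply]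
    rw [this, hφT]
    simp
  -- fixed points satisfy the recursion
  have hker_rec : ∀ x ∈ LinearMap.ker (TensorProduct.map φ J - LinearMap.id),
      ∀ k : ℕ, F k x = (T ^ k) (F 0 x) := by
    intro x hx k
    rw [LinearMap.mem_ker, LinearMap.sub_apply, LinearMap.id_apply, sub_eq_zero] at hx
    induction k with
    | zero => simp
    | succ k ih =>
      have h1 := congrArg (fun f => f x) (hFJ k)
      simp only [LinearMap.coe_comp, Function.comp_apply, LinearMap.add_apply, hx] at h1
      have h3 := congrArg ψ h1
      have hψφ' : ∀ w, ψ (φ w) = w := fun w => by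
        have := congrArg (fun f => f w) hψφ
        simpa using this
      simp only [map_add, hψφ'] at h3
      have h2 : F (k+1) x = T (F k x) := by
        have hTapp : T (F k x) = ψ (F k x) - F k x := by
          rw [hT]; simp
        rw [hTapp, h3]
        abel
      rw [h2, ih, ← Module.End.mul_apply, ← pow_succ']
  -- conclude with dimension count
  have hF0A : ∀ v, F 0 (A v) = v := fun v => by simpa using hFA 0 v
  set K := LinearMap.ker (TensorProduct.map φ J - LinearMap.id) with hK
  let A' : V →ₗ[ℂ] K := A.codRestrict K hAker
  have hA'inj : Function.Injective A' := by
    intro a b hab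
    have : A a = A b := congrArg Subtype.val hab
    rw [← hF0A a, ← hF0A b, this]
  let B : K →ₗ[ℂ] V := F 0 ∘ₗ K.subtype
  have hBinj : Function.Injective B := by
    have hB0' : ∀ z : K, B z = 0 → z = 0 := by
      rintro ⟨x, hx⟩ hBx
      have hB0 : F 0 x = 0 := hBx
      have hall : ∀ k : ℕ, F k x = 0 := fun k => by
        rw [hker_rec x hx k, hB0, map_zero]
      have hx0 : x = 0 := by
        rw [hrec x, Finset.sum_congr rfl fun i _ => by
          rw [hall (i : ℕ), TensorProduct.zero_tmul]]
        simp
      exact Subtype.ext hx0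
    intro z w h
    refine sub_eq_zero.mp (hB0' (z - w) ?_)
    exact (map_sub B z w).trans (sub_eq_zero_of_eq h)
  exact le_antisymm (LinearMap.finrank_le_finrank_of_injective hBinj)
    (LinearMap.finrank_le_finrank_of_injective hA'inj)
end
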